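/- arXiv:1601.05793 — 8 statements merged into one kernel-verified Lean document; each statement's English description precedes it below -/
import Mathlib

section
/- SAFT inversion formula: if f ∈ L¹(ℝ) is continuous and its SAFT F_A belongs to L¹(ℝ), then for every t ∈ ℝ, f(t) = (2πb)^(−1/2) · ∫_ℝ F_A(ω) · exp(−(Complex.I/(2b)) · (d·ω² + a·t² − 2·t·ω + Ω·ω + 2·p·t)) dω. -/
open MeasureTheory Real

/-- The Special Affine Fourier Transform (SAFT) with parameters `a, b, c, d, p, q`,
where `Ω = 2*(b*q - d*p)`. -/
noncomputable def SAFT (a b d p q : ℝ) (f : ℝ → ℂ) (ω : ℝ) : ℂ :=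
  (Real.sqrt (2 * π * b) : ℂ)⁻¹ *
    ∫ t : ℝ, f t * Complex.exp (Complex.I / (2 * b) *
      ((a * t ^ 2 + d * ω ^ 2 - 2 * t * ω + 2 * p * t + 2 * (b * q - d * p) * ω : ℝ) : ℂ))

open FourierTransform in
/-- SAFT inversion formula. -/
theorem saft_inversion (a b c d p q : ℝ) (hb : 0 < b) (habcd : a * d - b * c = 1)
    (f : ℝ → ℂ) (hf1 : Integrable f) (hfc : Continuous f)
    (hF1 : Integrable (SAFT a b d p q f)) :
    ∀ t : ℝ, f t =
      (Real.sqrt (2 * π * b) : ℂ)⁻¹ *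
        ∫ ω : ℝ, SAFT a b d p q f ω * Complex.exp (-(Complex.I / (2 * b)) *
          ((d * ω ^ 2 + a * t ^ 2 - 2 * t * ω + 2 * (b * q - d * p) * ω + 2 * p * t : ℝ) : ℂ)) := by
  intro t
  have hπb : (0:ℝ) < 2 * π * b := by positivity
  have hbne : (b:ℂ) ≠ 0 := by exact_mod_cast hb.ne'
  have hπne : (π:ℂ) ≠ 0 := by exact_mod_cast Real.pi_ne_zero
  have hnorm : ∀ z : ℂ, z.re = 0 → ‖Complex.exp z‖ = 1 := by
    intro z hz
    rw [Complex.norm_exp, hz, Real.exp_zero]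
  have hre : ∀ r : ℝ, (Complex.I / (2 * b) * (r : ℂ)).re = 0 := by
    intro r; simp [Complex.div_re, Complex.mul_re]
  have hre' : ∀ r : ℝ, (-(Complex.I / (2 * b)) * (r : ℂ)).re = 0 := by
    intro r; simp [Complex.div_re, Complex.mul_re]
  set g : ℝ → ℂ := fun s => f s * Complex.exp (Complex.I / (2 * b) *
      ((a * s ^ 2 + 2 * p * s : ℝ) : ℂ)) with hg_def
  have hgc : Continuous g := by
    apply hfc.mul
    exact Complex.continuous_exp.comp (by fun_prop)
  have hgint : Integrable g := by
    have := hf1.bdd_mul (f := fun s => Complex.exp (Complex.I / (2 * b) *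
        ((a * s ^ 2 + 2 * p * s : ℝ) : ℂ)))
      (Complex.continuous_exp.comp (by fun_prop)).aestronglyMeasurable
      (Filter.Eventually.of_forall fun s => le_of_eq (hnorm _ (hre _)))
    exact this.congr (Filter.Eventually.of_forall fun s => mul_comm _ _)
  have hs : ((Real.sqrt (2 * π * b) : ℝ) : ℂ) ≠ 0 := by
    exact_mod_cast (Real.sqrt_pos.2 hπb).ne'
  have hs1 : ((Real.sqrt (2 * π * b) : ℝ) : ℂ) * ((Real.sqrt (2 * π * b) : ℝ) : ℂ)⁻¹ = 1 :=
    mul_inv_cancel₀ hs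
  have hss : ((2 * π * b : ℝ) : ℂ) =
      ((Real.sqrt (2 * π * b) : ℝ) : ℂ) * ((Real.sqrt (2 * π * b) : ℝ) : ℂ) := by
    norm_cast
    exact (Real.mul_self_sqrt hπb.le).symm
  -- Key: express SAFT in terms of the Fourier transform of g
  have key : ∀ ω : ℝ, SAFT a b d p q f ω =
      (Real.sqrt (2 * π * b) : ℂ)⁻¹ *
        (Complex.exp (Complex.I / (2 * b) *
          ((d * ω ^ 2 + 2 * (b * q - d * p) * ω : ℝ) : ℂ)) * 𝓕 g ((2 * π * b)⁻¹ * ω)) := by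
    intro ω
    rw [SAFT, Real.fourier_real_eq_integral_exp_smul]
    congr 1
    simp_rw [smul_eq_mul]
    rw [← integral_const_mul]
    refine integral_congr_ae (Filter.Eventually.of_forall fun s => ?_)
    have h4 : Complex.exp (Complex.I / (2 * b) *
        ((a * s ^ 2 + d * ω ^ 2 - 2 * s * ω + 2 * p * s + 2 * (b * q - d * p) * ω : ℝ) : ℂ)) =
        Complex.exp (Complex.I / (2 * b) *
          ((d * ω ^ 2 + 2 * (b * q - d * p) * ω : ℝ) : ℂ)) *
        (Complex.exp (↑(-2 * π * s * ((2 * π * b)⁻¹ * ω)) * Complex.I) *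
         Complex.exp (Complex.I / (2 * b) * ((a * s ^ 2 + 2 * p * s : ℝ) : ℂ))) := by
      rw [show (-2 * π * s * ((2 * π * b)⁻¹ * ω) : ℝ) = -(s * ω) / b by
        field_simp]
      rw [← Complex.exp_add, ← Complex.exp_add]
      congr 1
      push_cast
      field_simp [hbne]
      ring
    simp only [hg_def]
    linear_combination f s * h4
  -- Integrability of 𝓕 g
  have hFgint : Integrable (𝓕 g) := by
    have h1 : Integrable (fun ξ : ℝ => SAFT a b d p q f (2 * π * b * ξ)) :=
      hF1.comp_mul_left' hπb.ne'
    have h2 : Integrable (fun ξ : ℝ =>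
        Complex.exp (-(Complex.I / (2 * b)) *
          ((d * (2 * π * b * ξ) ^ 2 + 2 * (b * q - d * p) * (2 * π * b * ξ) : ℝ) : ℂ)) *
        ((Real.sqrt (2 * π * b) : ℂ) * SAFT a b d p q f (2 * π * b * ξ))) := by
      refine Integrable.bdd_mul (h1.const_mul _) ?_ (Filter.Eventually.of_forall fun ξ => le_of_eq (hnorm _ (hre' _)))
      exact (Complex.continuous_exp.comp (by fun_prop)).aestronglyMeasurable
    have h3 : ∀ ξ : ℝ,
        Complex.exp (-(Complex.I / (2 * b)) *
          ((d * (2 * π * b * ξ) ^ 2 + 2 * (b * q - d * p) * (2 * π * b * ξ) : ℝ) : ℂ)) *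
        ((Real.sqrt (2 * π * b) : ℂ) * SAFT a b d p q f (2 * π * b * ξ)) = 𝓕 g ξ := by
      intro ξ
      rw [key (2 * π * b * ξ)]
      rw [show (2 * π * b)⁻¹ * (2 * π * b * ξ) = ξ by field_simp]
      have h4 : Complex.exp (-(Complex.I / (2 * b)) *
          ((d * (2 * π * b * ξ) ^ 2 + 2 * (b * q - d * p) * (2 * π * b * ξ) : ℝ) : ℂ)) *
          Complex.exp (Complex.I / (2 * b) *
          ((d * (2 * π * b * ξ) ^ 2 + 2 * (b * q - d * p) * (2 * π * b * ξ) : ℝ) : ℂ)) = 1 := by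
        rw [← Complex.exp_add, neg_mul, neg_add_cancel, Complex.exp_zero]
      linear_combination (𝓕 g ξ) * ((Real.sqrt (2 * π * b) : ℂ) *
          (Real.sqrt (2 * π * b) : ℂ)⁻¹) * h4 +
        (𝓕 g ξ) * hs1
    exact h2.congr (Filter.Eventually.of_forall fun ξ => h3 ξ)
  -- Fourier inversion for g
  have hinv : (∫ ξ : ℝ, Complex.exp (↑(2 * π * (ξ * t)) * Complex.I) • 𝓕 g ξ) = g t := by
    have h := hgint.fourierInv_fourier_eq hFgint (v := t) hgc.continuousAt
    rw [← h, Real.fourierInv_eq']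
    simp [RCLike.inner_apply]
    simp_rw [mul_comm (t:ℂ)]
  -- Substitution ξ = ω / (2πb)
  have hsub : (∫ ω : ℝ, Complex.exp (↑(2 * π * ((2 * π * b)⁻¹ * ω * t)) * Complex.I) •
      𝓕 g ((2 * π * b)⁻¹ * ω)) = ((2 * π * b : ℝ)) • g t := by
    have h := MeasureTheory.Measure.integral_comp_mul_left
      (fun ξ : ℝ => Complex.exp (↑(2 * π * (ξ * t)) * Complex.I) • 𝓕 g ξ) ((2 * π * b)⁻¹)
    simp only [inv_inv] at h
    rw [h, abs_of_pos hπb, hinv]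
  -- Rewrite the integrand of the RHS
  have hrw : ∀ ω : ℝ, SAFT a b d p q f ω * Complex.exp (-(Complex.I / (2 * b)) *
        ((d * ω ^ 2 + a * t ^ 2 - 2 * t * ω + 2 * (b * q - d * p) * ω + 2 * p * t : ℝ) : ℂ)) =
      (Real.sqrt (2 * π * b) : ℂ)⁻¹ *
        (Complex.exp (-(Complex.I / (2 * b)) * ((a * t ^ 2 + 2 * p * t : ℝ) : ℂ)) *
          (Complex.exp (↑(2 * π * ((2 * π * b)⁻¹ * ω * t)) * Complex.I) •
            𝓕 g ((2 * π * b)⁻¹ * ω))) := by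
    intro ω
    rw [key ω, smul_eq_mul]
    have h4 : Complex.exp (Complex.I / (2 * b) *
          ((d * ω ^ 2 + 2 * (b * q - d * p) * ω : ℝ) : ℂ)) *
        Complex.exp (-(Complex.I / (2 * b)) *
          ((d * ω ^ 2 + a * t ^ 2 - 2 * t * ω + 2 * (b * q - d * p) * ω + 2 * p * t : ℝ) : ℂ)) =
        Complex.exp (-(Complex.I / (2 * b)) * ((a * t ^ 2 + 2 * p * t : ℝ) : ℂ)) *
        Complex.exp (↑(2 * π * ((2 * π * b)⁻¹ * ω * t)) * Complex.I) := by
      rw [show (2 * π * ((2 * π * b)⁻¹ * ω * t) : ℝ) = ω * t / b by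
        field_simp]
      rw [← Complex.exp_add, ← Complex.exp_add]
      congr 1
      push_cast
      field_simp [hbne]
      ring
    linear_combination (Real.sqrt (2 * π * b) : ℂ)⁻¹ * 𝓕 g ((2 * π * b)⁻¹ * ω) * h4
  -- Final computation
  conv_rhs => rw [show (fun ω : ℝ => SAFT a b d p q f ω * Complex.exp (-(Complex.I / (2 * b)) *
        ((d * ω ^ 2 + a * t ^ 2 - 2 * t * ω + 2 * (b * q - d * p) * ω + 2 * p * t : ℝ) : ℂ))) =
      (fun ω : ℝ => (Real.sqrt (2 * π * b) : ℂ)⁻¹ *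
        (Complex.exp (-(Complex.I / (2 * b)) * ((a * t ^ 2 + 2 * p * t : ℝ) : ℂ)) *
          (Complex.exp (↑(2 * π * ((2 * π * b)⁻¹ * ω * t)) * Complex.I) •
            𝓕 g ((2 * π * b)⁻¹ * ω)))) from funext hrw]
  rw [integral_const_mul, integral_const_mul, hsub, Complex.real_smul]
  simp only [hg_def]
  have hexp1 : Complex.exp (-(Complex.I / (2 * b)) * ((a * t ^ 2 + 2 * p * t : ℝ) : ℂ)) *
      Complex.exp (Complex.I / (2 * b) * ((a * t ^ 2 + 2 * p * t : ℝ) : ℂ)) = 1 := by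
    rw [← Complex.exp_add, neg_mul, neg_add_cancel, Complex.exp_zero]
  linear_combination (-(((Real.sqrt (2 * π * b) : ℝ) : ℂ)⁻¹ *
        ((Real.sqrt (2 * π * b) : ℝ) : ℂ)⁻¹ *
        Complex.exp (-(Complex.I / (2 * b)) * ((a * t ^ 2 + 2 * p * t : ℝ) : ℂ)) * f t *
        Complex.exp (Complex.I / (2 * b) * ((a * t ^ 2 + 2 * p * t : ℝ) : ℂ)))) * hss +
      (-((((Real.sqrt (2 * π * b) : ℝ) : ℂ) * ((Real.sqrt (2 * π * b) : ℝ) : ℂ)⁻¹) ^ 2 * f t)) *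
        hexp1 +
      (-(f t) * (((Real.sqrt (2 * π * b) : ℝ) : ℂ) *
        ((Real.sqrt (2 * π * b) : ℝ) : ℂ)⁻¹ + 1)) * hs1
end

section
/- SAFT convolution theorem: let f, g ∈ L¹(ℝ) with SAFTs F_A and G_A, and let h = f ∗_A g. Then the SAFT H_A of h satisfies, for every ω ∈ ℝ, H_A(ω) = exp(−(Complex.I/(2b)) · (d·ω² + Ω·ω)) · F_A(ω) · G_A(ω). -/
open MeasureTheory Real

/-- The SAFT convolution `f ∗_A g`. -/
noncomputable def saftConv (a b : ℝ) (f g : ℝ → ℂ) (t : ℝ) : ℂ :=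
  (Real.sqrt |b| : ℂ)⁻¹ * Complex.exp (-(Complex.I * ((a * t ^ 2 / (2 * b) : ℝ) : ℂ))) *
    ((Real.sqrt (2 * π) : ℂ)⁻¹ *
      ∫ x : ℝ, Complex.exp (Complex.I * ((a * (t - x) ^ 2 / (2 * b) : ℝ) : ℂ)) * f (t - x) *
        (Complex.exp (Complex.I * ((a * x ^ 2 / (2 * b) : ℝ) : ℂ)) * g x))

lemma abs_exp_I_mul (r : ℝ) : ‖Complex.exp (Complex.I * (r : ℂ))‖ = 1 := by
  rw [Complex.norm_exp]
  simp [Complex.mul_re]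

lemma conv_mul_exp (F G : ℝ → ℂ) (hF : Integrable F) (hG : Integrable G) (r : ℝ) :
    (∫ t : ℝ, (∫ x : ℝ, F (t - x) * G x) * Complex.exp (Complex.I * ((r * t : ℝ) : ℂ)))
      = (∫ t : ℝ, F t * Complex.exp (Complex.I * ((r * t : ℝ) : ℂ))) *
        ∫ t : ℝ, G t * Complex.exp (Complex.I * ((r * t : ℝ) : ℂ)) := by
  have hconv : Integrable (fun z : ℝ × ℝ => G z.2 * F (z.1 - z.2))
      ((volume : Measure ℝ).prod volume) :=
    hG.convolution_integrand (ContinuousLinearMap.mul ℂ ℂ) hF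
  have hbig : Integrable (fun z : ℝ × ℝ =>
      F (z.1 - z.2) * G z.2 * Complex.exp (Complex.I * ((r * z.1 : ℝ) : ℂ)))
      ((volume : Measure ℝ).prod volume) := by
    have := hconv.bdd_mul
      (Continuous.aestronglyMeasurable (by fun_prop) :
        AEStronglyMeasurable (fun z : ℝ × ℝ => Complex.exp (Complex.I * ((r * z.1 : ℝ) : ℂ))) _)
      (Filter.Eventually.of_forall fun z => le_of_eq (abs_exp_I_mul (r * z.1)))
    convert this using 2 with z
    ring
  calc (∫ t : ℝ, (∫ x : ℝ, F (t - x) * G x) * Complex.exp (Complex.I * ((r * t : ℝ) : ℂ)))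
      = ∫ t : ℝ, ∫ x : ℝ, F (t - x) * G x * Complex.exp (Complex.I * ((r * t : ℝ) : ℂ)) := by
        congr 1; ext t; rw [← integral_mul_const]
    _ = ∫ x : ℝ, ∫ t : ℝ, F (t - x) * G x * Complex.exp (Complex.I * ((r * t : ℝ) : ℂ)) :=
        integral_integral_swap hbig
    _ = ∫ x : ℝ, (G x * Complex.exp (Complex.I * ((r * x : ℝ) : ℂ))) *
          ∫ t : ℝ, F t * Complex.exp (Complex.I * ((r * t : ℝ) : ℂ)) := by
        congr 1; ext x
        rw [← integral_const_mul]
        have : ∀ t : ℝ, F (t - x) * G x * Complex.exp (Complex.I * ((r * t : ℝ) : ℂ))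
            = (fun u : ℝ => G x * Complex.exp (Complex.I * ((r * x : ℝ) : ℂ)) *
                (F u * Complex.exp (Complex.I * ((r * u : ℝ) : ℂ)))) (t - x) := by
          intro t
          simp only
          have h2 : Complex.exp (Complex.I * ((r * x : ℝ) : ℂ)) *
              Complex.exp (Complex.I * ((r * (t - x) : ℝ) : ℂ))
              = Complex.exp (Complex.I * ((r * t : ℝ) : ℂ)) := by
            rw [← Complex.exp_add]; congr 1; push_cast; ring
          rw [← h2]; ring
        simp_rw [this]
        exact integral_sub_right_eq_self (fun u : ℝ =>
          G x * Complex.exp (Complex.I * ((r * x : ℝ) : ℂ)) *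
            (F u * Complex.exp (Complex.I * ((r * u : ℝ) : ℂ)))) x
    _ = (∫ t : ℝ, F t * Complex.exp (Complex.I * ((r * t : ℝ) : ℂ))) *
        ∫ t : ℝ, G t * Complex.exp (Complex.I * ((r * t : ℝ) : ℂ)) := by
        rw [integral_mul_const]; ring

lemma saft_eq (a b d p q ω : ℝ) (hb : 0 < b) (f : ℝ → ℂ) :
    SAFT a b d p q f ω = (Real.sqrt (2 * π * b) : ℂ)⁻¹ *
      Complex.exp (Complex.I / (2 * b) * ((d * ω ^ 2 + 2 * (b * q - d * p) * ω : ℝ) : ℂ)) *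
      ∫ t : ℝ, (Complex.exp (Complex.I * ((a * t ^ 2 / (2 * b) : ℝ) : ℂ)) * f t) *
        Complex.exp (Complex.I * (((p - ω) / b * t : ℝ) : ℂ)) := by
  have hb0 : (b : ℂ) ≠ 0 := by exact_mod_cast hb.ne'
  unfold SAFT
  have main : (∫ t : ℝ, f t * Complex.exp (Complex.I / (2 * b) *
      ((a * t ^ 2 + d * ω ^ 2 - 2 * t * ω + 2 * p * t + 2 * (b * q - d * p) * ω : ℝ) : ℂ)))
      = Complex.exp (Complex.I / (2 * b) * ((d * ω ^ 2 + 2 * (b * q - d * p) * ω : ℝ) : ℂ)) *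
        ∫ t : ℝ, (Complex.exp (Complex.I * ((a * t ^ 2 / (2 * b) : ℝ) : ℂ)) * f t) *
          Complex.exp (Complex.I * (((p - ω) / b * t : ℝ) : ℂ)) := by
    rw [← integral_const_mul]
    apply integral_congr_ae
    filter_upwards with t
    have hx : Complex.exp (Complex.I / (2 * b) *
          ((a * t ^ 2 + d * ω ^ 2 - 2 * t * ω + 2 * p * t + 2 * (b * q - d * p) * ω : ℝ) : ℂ))
        = Complex.exp (Complex.I / (2 * b) * ((d * ω ^ 2 + 2 * (b * q - d * p) * ω : ℝ) : ℂ)) *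
          Complex.exp (Complex.I * ((a * t ^ 2 / (2 * b) : ℝ) : ℂ)) *
          Complex.exp (Complex.I * (((p - ω) / b * t : ℝ) : ℂ)) := by
      rw [← Complex.exp_add, ← Complex.exp_add]
      congr 1
      push_cast
      field_simp
      ring
    rw [hx]; ring
  rw [main]; ring

/-- SAFT convolution theorem. -/
theorem saft_convolution (a b c d p q : ℝ) (hb : 0 < b) (habcd : a * d - b * c = 1)
    (f g : ℝ → ℂ) (hf : Integrable f) (hg : Integrable g) :
    ∀ ω : ℝ, SAFT a b d p q (saftConv a b f g) ω =
      Complex.exp (-(Complex.I / (2 * b)) *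
          ((d * ω ^ 2 + 2 * (b * q - d * p) * ω : ℝ) : ℂ)) *
        SAFT a b d p q f ω * SAFT a b d p q g ω := by
  intro ω
  have hb0 : (b : ℂ) ≠ 0 := by exact_mod_cast hb.ne'
  set ef : ℝ → ℂ := fun u => Complex.exp (Complex.I * ((a * u ^ 2 / (2 * b) : ℝ) : ℂ)) * f u
    with hef_def
  set eg : ℝ → ℂ := fun u => Complex.exp (Complex.I * ((a * u ^ 2 / (2 * b) : ℝ) : ℂ)) * g u
    with heg_def
  have hef : Integrable ef := hf.bdd_mul
    (Continuous.aestronglyMeasurable (by fun_prop))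
    (Filter.Eventually.of_forall fun u => le_of_eq (abs_exp_I_mul (a * u ^ 2 / (2 * b))))
  have heg : Integrable eg := hg.bdd_mul
    (Continuous.aestronglyMeasurable (by fun_prop))
    (Filter.Eventually.of_forall fun u => le_of_eq (abs_exp_I_mul (a * u ^ 2 / (2 * b))))
  set K : ℂ := Complex.exp (Complex.I / (2 * b) *
    ((d * ω ^ 2 + 2 * (b * q - d * p) * ω : ℝ) : ℂ)) with hK_def
  set C : ℂ := (Real.sqrt (2 * π * b) : ℂ)⁻¹ with hC_def
  set χ : ℝ → ℂ := fun t => Complex.exp (Complex.I * (((p - ω) / b * t : ℝ) : ℂ)) with hχ_def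
  rw [saft_eq a b d p q ω hb, saft_eq a b d p q ω hb f, saft_eq a b d p q ω hb g]
  have step : (∫ t : ℝ, (Complex.exp (Complex.I * ((a * t ^ 2 / (2 * b) : ℝ) : ℂ)) *
        saftConv a b f g t) * χ t)
      = ((Real.sqrt b : ℂ)⁻¹ * (Real.sqrt (2 * π) : ℂ)⁻¹) *
        ((∫ t : ℝ, ef t * χ t) * ∫ t : ℝ, eg t * χ t) := by
    have hpt : ∀ t : ℝ, (Complex.exp (Complex.I * ((a * t ^ 2 / (2 * b) : ℝ) : ℂ)) *
        saftConv a b f g t) * χ t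
        = ((Real.sqrt b : ℂ)⁻¹ * (Real.sqrt (2 * π) : ℂ)⁻¹) *
          ((∫ x : ℝ, ef (t - x) * eg x) * χ t) := by
      intro t
      unfold saftConv
      rw [abs_of_pos hb]
      have hcancel : Complex.exp (Complex.I * ((a * t ^ 2 / (2 * b) : ℝ) : ℂ)) *
          Complex.exp (-(Complex.I * ((a * t ^ 2 / (2 * b) : ℝ) : ℂ))) = 1 := by
        rw [← Complex.exp_add]; simp
      have hJ : (∫ x : ℝ, Complex.exp (Complex.I * ((a * (t - x) ^ 2 / (2 * b) : ℝ) : ℂ)) *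
            f (t - x) * (Complex.exp (Complex.I * ((a * x ^ 2 / (2 * b) : ℝ) : ℂ)) * g x))
          = ∫ x : ℝ, ef (t - x) * eg x := rfl
      rw [hJ]
      calc Complex.exp (Complex.I * ((a * t ^ 2 / (2 * b) : ℝ) : ℂ)) *
            ((Real.sqrt b : ℂ)⁻¹ * Complex.exp (-(Complex.I * ((a * t ^ 2 / (2 * b) : ℝ) : ℂ))) *
              ((Real.sqrt (2 * π) : ℂ)⁻¹ * ∫ x : ℝ, ef (t - x) * eg x)) * χ t
          = (Complex.exp (Complex.I * ((a * t ^ 2 / (2 * b) : ℝ) : ℂ)) *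
              Complex.exp (-(Complex.I * ((a * t ^ 2 / (2 * b) : ℝ) : ℂ)))) *
            (((Real.sqrt b : ℂ)⁻¹ * (Real.sqrt (2 * π) : ℂ)⁻¹) *
              ((∫ x : ℝ, ef (t - x) * eg x) * χ t)) := by ring
        _ = ((Real.sqrt b : ℂ)⁻¹ * (Real.sqrt (2 * π) : ℂ)⁻¹) *
              ((∫ x : ℝ, ef (t - x) * eg x) * χ t) := by rw [hcancel]; ring
    simp_rw [hpt]
    rw [integral_const_mul]
    congr 1
    exact conv_mul_exp ef eg hef heg ((p - ω) / b)
  rw [step]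
  have hsqrt : (Real.sqrt b : ℂ)⁻¹ * (Real.sqrt (2 * π) : ℂ)⁻¹ = C := by
    rw [hC_def, ← mul_inv]
    congr 1
    rw [← Complex.ofReal_mul]
    congr 1
    rw [mul_comm]
    exact (Real.sqrt_mul (by positivity : (0:ℝ) ≤ 2 * π) b).symm
  rw [hsqrt]
  have hEK : Complex.exp (-(Complex.I / (2 * b)) *
      ((d * ω ^ 2 + 2 * (b * q - d * p) * ω : ℝ) : ℂ)) * (K * K) = K := by
    rw [hK_def, ← Complex.exp_add, ← Complex.exp_add]
    congr 1
    ring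
  calc C * K * (C * ((∫ t : ℝ, ef t * χ t) * ∫ t : ℝ, eg t * χ t))
      = (Complex.exp (-(Complex.I / (2 * b)) *
          ((d * ω ^ 2 + 2 * (b * q - d * p) * ω : ℝ) : ℂ)) * (K * K)) *
        (C * C * ((∫ t : ℝ, ef t * χ t) * ∫ t : ℝ, eg t * χ t)) := by rw [hEK]; ring
    _ = Complex.exp (-(Complex.I / (2 * b)) *
          ((d * ω ^ 2 + 2 * (b * q - d * p) * ω : ℝ) : ℂ)) *
        (C * K * ∫ t : ℝ, ef t * χ t) * (C * K * ∫ t : ℝ, eg t * χ t) := by ring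
end

section
/- Semi-discrete SAFT convolution theorem: let c : ℤ → ℂ be absolutely summable and φ ∈ L¹(ℝ) with SAFT Φ_A, and let h be the semi-discrete SAFT convolution of c with φ. Then the SAFT H_A of h satisfies, for every ω ∈ ℝ, H_A(ω) = exp(−(Complex.I/(2b)) · (d·ω² + Ω·ω)) · Ĉ_A(ω) · Φ_A(ω), where Ĉ_A is the discrete-time SAFT of c. -/
open MeasureTheory Real

/-- The discrete-time SAFT of a sequence `c : ℤ → ℂ`. -/
noncomputable def dtSAFT (a b d p q : ℝ) (c : ℤ → ℂ) (ω : ℝ) : ℂ :=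
  (Real.sqrt (2 * π * b) : ℂ)⁻¹ *
    ∑' k : ℤ, c k * Complex.exp (Complex.I / (2 * b) *
      ((a * (k : ℝ) ^ 2 + d * ω ^ 2 - 2 * (k : ℝ) * ω + 2 * (b * q - d * p) * ω
        + 2 * p * (k : ℝ) : ℝ) : ℂ))

/-- The semi-discrete SAFT convolution of a sequence `c : ℤ → ℂ` with `φ : ℝ → ℂ`. -/
noncomputable def semiDiscreteSaftConv (a b : ℝ) (c : ℤ → ℂ) (φ : ℝ → ℂ) (t : ℝ) : ℂ :=
  (Real.sqrt (2 * π * b) : ℂ)⁻¹ * Complex.exp (-(Complex.I * ((a * t ^ 2 / (2 * b) : ℝ) : ℂ))) *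
    ∑' k : ℤ, c k * Complex.exp (Complex.I * ((a * (k : ℝ) ^ 2 / (2 * b) : ℝ) : ℂ)) *
      Complex.exp (Complex.I * ((a * (t - (k : ℝ)) ^ 2 / (2 * b) : ℝ) : ℂ)) * φ (t - (k : ℝ))

/-- `cexp r = exp(i r)` for real `r`. -/
noncomputable def cexp (r : ℝ) : ℂ := Complex.exp (Complex.I * (r : ℂ))

lemma cexp_def (r : ℝ) : Complex.exp (Complex.I * (r : ℂ)) = cexp r := rfl

lemma cexp_add (r s : ℝ) : cexp r * cexp s = cexp (r + s) := by
  rw [cexp, cexp, cexp, ← Complex.exp_add]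
  congr 1
  push_cast
  ring

lemma norm_cexp (r : ℝ) : ‖cexp r‖ = 1 := by
  rw [← cexp_def, Complex.norm_exp]
  simp

lemma nnnorm_cexp (r : ℝ) : ‖cexp r‖₊ = 1 :=
  NNReal.coe_injective (by rw [coe_nnnorm, norm_cexp]; simp)

lemma continuous_cexp : Continuous cexp :=
  Complex.continuous_exp.comp (continuous_const.mul Complex.continuous_ofReal)

lemma cexp_neg' (r : ℝ) : Complex.exp (-(Complex.I * (r : ℂ))) = cexp (-r) := by
  rw [cexp]; congr 1; push_cast; ring

lemma key_exp (z w : ℂ) (r1 r2 r3 r4 s : ℝ) (h : r1 + r2 + r3 + r4 = s) :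
    cexp r1 * (z * cexp r2 * cexp r3 * w * cexp r4) = z * cexp s * w := by
  have hE : cexp r1 * cexp r2 * cexp r3 * cexp r4 = cexp s := by
    rw [cexp_add, cexp_add, cexp_add, h]
  rw [← hE]; ring

/-- Semi-discrete SAFT convolution theorem. -/
theorem semi_discrete_saft_convolution (a b c d p q : ℝ) (hb : 0 < b)
    (habcd : a * d - b * c = 1) (cseq : ℤ → ℂ) (hc : Summable fun k : ℤ => ‖cseq k‖)
    (φ : ℝ → ℂ) (hφ : Integrable φ) :
    ∀ ω : ℝ, SAFT a b d p q (semiDiscreteSaftConv a b cseq φ) ω =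
      Complex.exp (-(Complex.I / (2 * b)) * ((d * ω ^ 2 + 2 * (b * q - d * p) * ω : ℝ) : ℂ)) *
        dtSAFT a b d p q cseq ω * SAFT a b d p q φ ω := by
  intro ω
  have hb0 : (b : ℝ) ≠ 0 := ne_of_gt hb
  set S : ℂ := ((Real.sqrt (2 * π * b) : ℝ) : ℂ)⁻¹ with hS
  set Ω : ℝ := 2 * (b * q - d * p) with hΩ
  -- rewrite exponentials in the `I/(2b) * X` form into `cexp` form
  have hexp : ∀ X : ℝ, Complex.exp (Complex.I / (2 * b) * (X : ℂ)) = cexp (X / (2 * b)) := by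
    intro X
    rw [cexp]
    congr 1
    push_cast
    ring
  have hexpneg : Complex.exp (-(Complex.I / (2 * b)) * ((d * ω ^ 2 + Ω * ω : ℝ) : ℂ)) =
      cexp (-((d * ω ^ 2 + Ω * ω) / (2 * b))) := by
    rw [cexp]
    congr 1
    push_cast
    ring
  -- abbreviations
  set F : ℝ → ℂ := fun u => φ u *
    cexp ((a * u ^ 2 + d * ω ^ 2 - 2 * u * ω + 2 * p * u + Ω * ω) / (2 * b)) with hF
  set Iφ : ℂ := ∫ u : ℝ, F u with hIφ
  have hSAFTφ : SAFT a b d p q φ ω = S * Iφ := by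
    rw [SAFT, hIφ]
    congr 1
    refine integral_congr_ae (Filter.Eventually.of_forall fun t => ?_)
    beta_reduce
    rw [hexp]
  set g : ℤ → ℝ → ℂ := fun k t => cseq k *
    cexp ((a * (k : ℝ) ^ 2 + a * (t - (k : ℝ)) ^ 2 + d * ω ^ 2 - 2 * t * ω + 2 * p * t + Ω * ω)
      / (2 * b)) * φ (t - (k : ℝ)) with hg
  -- Step A: pointwise identity for the integrand
  have hA : ∀ t : ℝ, semiDiscreteSaftConv a b cseq φ t * Complex.exp (Complex.I / (2 * b) *
      ((a * t ^ 2 + d * ω ^ 2 - 2 * t * ω + 2 * p * t + Ω * ω : ℝ) : ℂ)) =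
      S * ∑' k : ℤ, g k t := by
    intro t
    rw [semiDiscreteSaftConv, hexp, cexp_neg']
    simp only [cexp_def]
    rw [mul_assoc, mul_assoc]
    congr 1
    rw [← tsum_mul_right, ← tsum_mul_left]
    refine tsum_congr fun k => ?_
    exact key_exp (cseq k) (φ (t - (k : ℝ))) _ _ _ _ _ (by ring)
  -- measurability
  have hmeas : ∀ k : ℤ, AEStronglyMeasurable (g k) volume := by
    intro k
    refine AEStronglyMeasurable.mul ?_ ((hφ.comp_sub_right (k : ℝ)).aestronglyMeasurable)
    exact (continuous_const.mul (continuous_cexp.comp (by fun_prop))).aestronglyMeasurable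
  -- finiteness of the sum of L¹ norms
  have hc' : Summable fun k : ℤ => ‖cseq k‖₊ := NNReal.summable_coe.mp (by simpa using hc)
  have hlin : ∀ k : ℤ, ∫⁻ t : ℝ, (‖g k t‖₊ : ENNReal) =
      (‖cseq k‖₊ : ENNReal) * ∫⁻ t : ℝ, (‖φ t‖₊ : ENNReal) := by
    intro k
    have h1 : ∀ t : ℝ, (‖g k t‖₊ : ENNReal) =
        (‖cseq k‖₊ : ENNReal) * (‖φ (t - (k : ℝ))‖₊ : ENNReal) := by
      intro t
      rw [hg]
      simp [nnnorm_mul, nnnorm_cexp]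
    rw [lintegral_congr h1, lintegral_const_mul' _ _ ENNReal.coe_ne_top,
      lintegral_sub_right_eq_self (fun t => (‖φ t‖₊ : ENNReal)) (k : ℝ)]
  have hfin : ∑' k : ℤ, ∫⁻ t : ℝ, (‖g k t‖₊ : ENNReal) ≠ ⊤ := by
    simp only [hlin]
    rw [ENNReal.tsum_mul_right]
    exact ENNReal.mul_ne_top (ENNReal.tsum_coe_ne_top_iff_summable.mpr hc') hφ.2.ne
  -- evaluate each integral
  have heval : ∀ k : ℤ, (∫ t : ℝ, g k t) =
      cseq k * cexp ((a * (k : ℝ) ^ 2 - 2 * (k : ℝ) * ω + 2 * p * (k : ℝ)) / (2 * b)) * Iφ := by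
    intro k
    have hgF : ∀ t : ℝ, g k t =
        (cseq k * cexp ((a * (k : ℝ) ^ 2 - 2 * (k : ℝ) * ω + 2 * p * (k : ℝ)) / (2 * b))) *
          F (t - (k : ℝ)) := by
      intro t
      simp only [hg, hF]
      have hE : cexp ((a * (k : ℝ) ^ 2 - 2 * (k : ℝ) * ω + 2 * p * (k : ℝ)) / (2 * b)) *
          cexp ((a * (t - (k : ℝ)) ^ 2 + d * ω ^ 2 - 2 * (t - (k : ℝ)) * ω + 2 * p * (t - (k : ℝ))
            + Ω * ω) / (2 * b)) =
          cexp ((a * (k : ℝ) ^ 2 + a * (t - (k : ℝ)) ^ 2 + d * ω ^ 2 - 2 * t * ω + 2 * p * t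
            + Ω * ω) / (2 * b)) := by
        rw [cexp_add]
        congr 1
        ring
      rw [← hE]
      ring
    simp only [hgF]
    rw [integral_const_mul, integral_sub_right_eq_self F (k : ℝ), ← hIφ, mul_assoc]
  -- assemble
  rw [SAFT, dtSAFT, hSAFTφ, hexpneg]
  simp only [hexp]
  have hLHS : (∫ t : ℝ, semiDiscreteSaftConv a b cseq φ t * cexp ((a * t ^ 2 + d * ω ^ 2
      - 2 * t * ω + 2 * p * t + Ω * ω) / (2 * b))) = S * ∑' k : ℤ, ∫ t : ℝ, g k t := by
    rw [← integral_tsum hmeas hfin, ← integral_const_mul]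
    refine integral_congr_ae (Filter.Eventually.of_forall fun t => ?_)
    beta_reduce
    rw [← hexp]
    exact hA t
  rw [hLHS]
  simp only [heval]
  rw [tsum_mul_right]
  have hts : cexp (-((d * ω ^ 2 + Ω * ω) / (2 * b))) *
      ∑' k : ℤ, cseq k * cexp ((a * (k : ℝ) ^ 2 + d * ω ^ 2 - 2 * (k : ℝ) * ω + Ω * ω
        + 2 * p * (k : ℝ)) / (2 * b)) =
      ∑' k : ℤ, cseq k * cexp ((a * (k : ℝ) ^ 2 - 2 * (k : ℝ) * ω + 2 * p * (k : ℝ)) / (2 * b)) := by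
    rw [← tsum_mul_left]
    refine tsum_congr fun k => ?_
    have hE : cexp (-((d * ω ^ 2 + Ω * ω) / (2 * b))) *
        cexp ((a * (k : ℝ) ^ 2 + d * ω ^ 2 - 2 * (k : ℝ) * ω + Ω * ω + 2 * p * (k : ℝ)) / (2 * b))
        = cexp ((a * (k : ℝ) ^ 2 - 2 * (k : ℝ) * ω + 2 * p * (k : ℝ)) / (2 * b)) := by
      rw [cexp_add]
      congr 1
      ring
    rw [← hE]
    ring
  rw [← hts]
  ring
end

section
/- Periodization identity for SAFT shift-invariant spaces: let c : ℤ → ℂ be absolutely summable and φ ∈ L¹(ℝ) with SAFT Φ_A. Then, as an identity in [0, ∞], ∫_ℝ |Ĉ_A(ω)|² · |Φ_A(ω)|² dω = ∫_0^Δ |Ĉ_A(ω)|² · (Σ_{k∈ℤ} |Φ_A(ω + k·Δ)|²) dω, where Ĉ_A is the discrete-time SAFT of c. -/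
open MeasureTheory Real
open scoped ENNReal NNReal

lemma norm_exp_I_div (b x : ℝ) : ‖Complex.exp (Complex.I / (2 * b) * (x : ℂ))‖ = 1 := by
  rw [show Complex.I / (2 * (b:ℝ)) * (x:ℂ) = ((x / (2*b) : ℝ) : ℂ) * Complex.I from by
    push_cast; ring, Complex.norm_exp_ofReal_mul_I]

lemma cont_SAFT (a b d p q : ℝ) (φ : ℝ → ℂ) (hφ : Integrable φ) :
    Continuous (SAFT a b d p q φ) := by
  unfold SAFT
  refine continuous_const.mul ?_
  refine continuous_of_dominated (fun ω => ?_) (fun ω => ?_) hφ.norm ?_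
  · exact hφ.aestronglyMeasurable.mul (Continuous.aestronglyMeasurable (by fun_prop))
  · filter_upwards with t
    rw [norm_mul, norm_exp_I_div, mul_one]
  · filter_upwards with t
    fun_prop

lemma cont_dtSAFT (a b d p q : ℝ) (c : ℤ → ℂ) (hc : Summable fun k : ℤ => ‖c k‖) :
    Continuous (dtSAFT a b d p q c) := by
  unfold dtSAFT
  refine continuous_const.mul (continuous_tsum (fun k => by fun_prop) hc (fun k ω => ?_))
  rw [norm_mul, norm_exp_I_div, mul_one]

lemma dt_norm_periodic (a b d p q : ℝ) (hb : b ≠ 0) (c : ℤ → ℂ) (ω : ℝ) (k : ℤ) :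
    ‖dtSAFT a b d p q c (ω + k * (2 * π * b))‖ = ‖dtSAFT a b d p q c ω‖ := by
  have hb' : (b:ℂ) ≠ 0 := Complex.ofReal_ne_zero.2 hb
  set U : ℂ := Complex.exp (Complex.I / (2 * b) *
    ((d * (2 * ω * (k * (2*π*b)) + (k * (2*π*b))^2)
      + 2 * (b * q - d * p) * (k * (2*π*b)) : ℝ) : ℂ)) with hU
  have key : ∀ k' : ℤ,
      c k' * Complex.exp (Complex.I / (2 * b) *
        ((a * (k' : ℝ) ^ 2 + d * (ω + k * (2*π*b)) ^ 2 - 2 * (k' : ℝ) * (ω + k * (2*π*b))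
          + 2 * (b * q - d * p) * (ω + k * (2*π*b)) + 2 * p * (k' : ℝ) : ℝ) : ℂ))
      = U * (c k' * Complex.exp (Complex.I / (2 * b) *
        ((a * (k' : ℝ) ^ 2 + d * ω ^ 2 - 2 * (k' : ℝ) * ω + 2 * (b * q - d * p) * ω
          + 2 * p * (k' : ℝ) : ℝ) : ℂ))) := by
    intro k'
    have hexp : Complex.exp (Complex.I / (2 * b) *
        ((a * (k' : ℝ) ^ 2 + d * (ω + k * (2*π*b)) ^ 2 - 2 * (k' : ℝ) * (ω + k * (2*π*b))
          + 2 * (b * q - d * p) * (ω + k * (2*π*b)) + 2 * p * (k' : ℝ) : ℝ) : ℂ))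
        = U * Complex.exp (Complex.I / (2 * b) *
        ((a * (k' : ℝ) ^ 2 + d * ω ^ 2 - 2 * (k' : ℝ) * ω + 2 * (b * q - d * p) * ω
          + 2 * p * (k' : ℝ) : ℝ) : ℂ)) := by
      rw [hU, ← Complex.exp_add, ← mul_one (Complex.exp _),
        ← Complex.exp_int_mul_two_pi_mul_I (k*k'), ← Complex.exp_add]
      congr 1
      push_cast
      field_simp
      ring
    rw [hexp]; ring
  unfold dtSAFT
  rw [norm_mul, norm_mul]
  congr 1
  calc ‖∑' k' : ℤ, c k' * Complex.exp (Complex.I / (2 * b) *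
        ((a * (k' : ℝ) ^ 2 + d * (ω + k * (2*π*b)) ^ 2 - 2 * (k' : ℝ) * (ω + k * (2*π*b))
          + 2 * (b * q - d * p) * (ω + k * (2*π*b)) + 2 * p * (k' : ℝ) : ℝ) : ℂ))‖
      = ‖U * ∑' k' : ℤ, c k' * Complex.exp (Complex.I / (2 * b) *
        ((a * (k' : ℝ) ^ 2 + d * ω ^ 2 - 2 * (k' : ℝ) * ω + 2 * (b * q - d * p) * ω
          + 2 * p * (k' : ℝ) : ℝ) : ℂ))‖ := by
        rw [← tsum_mul_left]; exact congrArg _ (tsum_congr key)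
    _ = _ := by
        rw [norm_mul, hU, norm_exp_I_div, one_mul]

/-- Periodization identity for SAFT shift-invariant spaces (an identity in `[0, ∞]`),
with `Δ = 2πb`. -/
theorem saft_periodization (a b c d p q : ℝ) (hb : 0 < b) (habcd : a * d - b * c = 1)
    (cseq : ℤ → ℂ) (hc : Summable fun k : ℤ => ‖cseq k‖)
    (φ : ℝ → ℂ) (hφ : Integrable φ) :
    (∫⁻ ω : ℝ, (‖dtSAFT a b d p q cseq ω‖₊ : ℝ≥0∞) ^ 2 *
        (‖SAFT a b d p q φ ω‖₊ : ℝ≥0∞) ^ 2) =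
      ∫⁻ ω in Set.Icc (0:ℝ) (2 * π * b), (‖dtSAFT a b d p q cseq ω‖₊ : ℝ≥0∞) ^ 2 *
        ∑' k : ℤ, (‖SAFT a b d p q φ (ω + (k : ℝ) * (2 * π * b))‖₊ : ℝ≥0∞) ^ 2 := by
  have hΔ : 0 < 2 * π * b := by positivity
  have hcC : Continuous (dtSAFT a b d p q cseq) := cont_dtSAFT a b d p q cseq hc
  have hφC : Continuous (SAFT a b d p q φ) := cont_SAFT a b d p q φ hφ
  set F : ℝ → ℝ≥0∞ := fun ω => (‖dtSAFT a b d p q cseq ω‖₊ : ℝ≥0∞) ^ 2 *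
      (‖SAFT a b d p q φ ω‖₊ : ℝ≥0∞) ^ 2 with hF
  have hFm : Measurable F := by
    apply Measurable.fun_mul
    · exact (hcC.measurable.nnnorm.coe_nnreal_ennreal).pow_const 2
    · exact (hφC.measurable.nnnorm.coe_nnreal_ennreal).pow_const 2
  have hbij : Function.Bijective (fun n : ℤ =>
      (⟨n • (2 * π * b), AddSubgroup.mem_zmultiples_iff.2 ⟨n, rfl⟩⟩ :
        AddSubgroup.zmultiples (2 * π * b))) := by
    constructor
    · intro m n hmn
      exact (zsmul_left_strictMono hΔ).injective (congrArg Subtype.val hmn)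
    · rintro ⟨x, hx⟩
      obtain ⟨n, rfl⟩ := AddSubgroup.mem_zmultiples_iff.1 hx
      exact ⟨n, rfl⟩
  have hpt : ∀ ω : ℝ, (∑' g : AddSubgroup.zmultiples (2 * π * b), F (g +ᵥ ω)) =
      (‖dtSAFT a b d p q cseq ω‖₊ : ℝ≥0∞) ^ 2 *
        ∑' k : ℤ, (‖SAFT a b d p q φ (ω + (k : ℝ) * (2 * π * b))‖₊ : ℝ≥0∞) ^ 2 := by
    intro ω
    rw [← Equiv.tsum_eq (Equiv.ofBijective _ hbij), ← ENNReal.tsum_mul_left]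
    refine tsum_congr fun n => ?_
    have h1 : Equiv.ofBijective _ hbij n +ᵥ ω = ω + n * (2 * π * b) := by
      rw [Equiv.ofBijective_apply, AddSubgroup.vadd_def, vadd_eq_add]
      show (n • (2 * π * b) : ℝ) + ω = _
      rw [zsmul_eq_mul]; ring
    rw [h1]
    simp only [hF]
    have h2 : ‖dtSAFT a b d p q cseq (ω + n * (2 * π * b))‖₊ = ‖dtSAFT a b d p q cseq ω‖₊ :=
      NNReal.coe_injective (dt_norm_periodic a b d p q hb.ne' cseq ω n)
    rw [h2]
  calc (∫⁻ ω : ℝ, F ω)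
      = ∑' g : AddSubgroup.zmultiples (2 * π * b),
          ∫⁻ ω in Set.Ioc (0:ℝ) (0 + 2 * π * b), F (g +ᵥ ω) :=
        (isAddFundamentalDomain_Ioc hΔ 0).lintegral_eq_tsum'' F
    _ = ∫⁻ ω in Set.Ioc (0:ℝ) (0 + 2 * π * b),
          ∑' g : AddSubgroup.zmultiples (2 * π * b), F (g +ᵥ ω) :=
        (lintegral_tsum fun g => (hFm.comp (measurable_const_add _)).aemeasurable).symm
    _ = ∫⁻ ω in Set.Icc (0:ℝ) (2 * π * b),
          ∑' g : AddSubgroup.zmultiples (2 * π * b), F (g +ᵥ ω) := by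
        rw [zero_add, Measure.restrict_congr_set Ioc_ae_eq_Icc]
    _ = _ := by
        refine lintegral_congr fun ω => hpt ω
end

section
/- Grammian factorization: let c : ℤ → ℂ be absolutely summable with discrete-time SAFT Ĉ_A, let φ ∈ L¹(ℝ) with SAFT Φ_A, and define F_A(ω) := exp(−(Complex.I/(2b))·(d·ω² + Ω·ω)) · Ĉ_A(ω) · Φ_A(ω). Then for every ω ∈ ℝ, Σ_{k∈ℤ} |F_A(ω + k·Δ)|² = |Ĉ_A(ω)|² · Σ_{k∈ℤ} |Φ_A(ω + k·Δ)|² (an identity in [0, ∞]). -/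
open MeasureTheory Real
open scoped ENNReal NNReal

lemma unimod (r : ℝ) (s : ℝ) : ‖Complex.exp (Complex.I / (s : ℂ) * (r : ℂ))‖₊ = 1 := by
  rcases eq_or_ne s 0 with h | h
  · simp [h]
  · have h2 : Complex.I / (s : ℂ) * (r : ℂ) = ((r / s : ℝ) : ℂ) * Complex.I := by
      have hs : (s : ℂ) ≠ 0 := by exact_mod_cast h
      push_cast; field_simp
    rw [h2]
    have h3 : ‖Complex.exp (((r / s : ℝ) : ℂ) * Complex.I)‖ = 1 := by
      rw [Complex.norm_exp_ofReal_mul_I]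
    exact NNReal.eq (by simpa using h3)

lemma unimod' (r : ℝ) (s : ℝ) : ‖Complex.exp (-(Complex.I / (s : ℂ)) * (r : ℂ))‖₊ = 1 := by
  have h : -(Complex.I / (s : ℂ)) * (r : ℂ) = Complex.I / (s : ℂ) * ((-r : ℝ) : ℂ) := by
    push_cast; ring
  rw [h]; exact unimod _ _

lemma dtSAFT_shift (a b d p q : ℝ) (hb : 0 < b) (c : ℤ → ℂ) (ω : ℝ) (m : ℤ) :
    ‖dtSAFT a b d p q c (ω + (m : ℝ) * (2 * π * b))‖₊ = ‖dtSAFT a b d p q c ω‖₊ := by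
  have hb' : (b : ℂ) ≠ 0 := by exact_mod_cast hb.ne'
  set R : ℝ := d * ((ω + (m : ℝ) * (2 * π * b)) ^ 2 - ω ^ 2)
      + 2 * (b * q - d * p) * ((m : ℝ) * (2 * π * b)) with hR
  have key : ∀ k : ℤ,
      c k * Complex.exp (Complex.I / (2 * b) *
        ((a * (k : ℝ) ^ 2 + d * (ω + (m : ℝ) * (2 * π * b)) ^ 2
          - 2 * (k : ℝ) * (ω + (m : ℝ) * (2 * π * b))
          + 2 * (b * q - d * p) * (ω + (m : ℝ) * (2 * π * b)) + 2 * p * (k : ℝ) : ℝ) : ℂ)) =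
      Complex.exp (Complex.I / (2 * b) * (R : ℂ)) *
        (c k * Complex.exp (Complex.I / (2 * b) *
          ((a * (k : ℝ) ^ 2 + d * ω ^ 2 - 2 * (k : ℝ) * ω + 2 * (b * q - d * p) * ω
            + 2 * p * (k : ℝ) : ℝ) : ℂ))) := by
    intro k
    have harg : Complex.I / (2 * b) *
        ((a * (k : ℝ) ^ 2 + d * (ω + (m : ℝ) * (2 * π * b)) ^ 2
          - 2 * (k : ℝ) * (ω + (m : ℝ) * (2 * π * b))
          + 2 * (b * q - d * p) * (ω + (m : ℝ) * (2 * π * b)) + 2 * p * (k : ℝ) : ℝ) : ℂ) =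
        Complex.I / (2 * b) * (R : ℂ) +
        Complex.I / (2 * b) *
          ((a * (k : ℝ) ^ 2 + d * ω ^ 2 - 2 * (k : ℝ) * ω + 2 * (b * q - d * p) * ω
            + 2 * p * (k : ℝ) : ℝ) : ℂ) +
        ((-(k * m) : ℤ) : ℂ) * (2 * (π : ℂ) * Complex.I) := by
      rw [hR]
      push_cast
      field_simp
      ring
    rw [harg, Complex.exp_add, Complex.exp_add, Complex.exp_int_mul_two_pi_mul_I]
    ring
  have hsum : dtSAFT a b d p q c (ω + (m : ℝ) * (2 * π * b)) =
      (Real.sqrt (2 * π * b) : ℂ)⁻¹ * (Complex.exp (Complex.I / (2 * b) * (R : ℂ)) *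
        ∑' k : ℤ, c k * Complex.exp (Complex.I / (2 * b) *
          ((a * (k : ℝ) ^ 2 + d * ω ^ 2 - 2 * (k : ℝ) * ω + 2 * (b * q - d * p) * ω
            + 2 * p * (k : ℝ) : ℝ) : ℂ))) := by
    rw [dtSAFT]
    congr 1
    rw [← tsum_mul_left]
    exact tsum_congr key
  rw [hsum, dtSAFT, nnnorm_mul, nnnorm_mul, nnnorm_mul]
  have : ((2 : ℂ) * b) = ((2 * b : ℝ) : ℂ) := by push_cast; ring
  rw [this, unimod]
  ring

/-- Grammian factorization for SAFT shift-invariant spaces (an identity in `[0, ∞]`),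
with `Δ = 2πb`. -/
theorem saft_grammian_factorization (a b c d p q : ℝ) (hb : 0 < b)
    (habcd : a * d - b * c = 1) (cseq : ℤ → ℂ) (hc : Summable fun k : ℤ => ‖cseq k‖)
    (φ : ℝ → ℂ) (hφ : Integrable φ)
    (F : ℝ → ℂ)
    (hF : ∀ ω : ℝ, F ω =
      Complex.exp (-(Complex.I / (2 * b)) * ((d * ω ^ 2 + 2 * (b * q - d * p) * ω : ℝ) : ℂ)) *
        dtSAFT a b d p q cseq ω * SAFT a b d p q φ ω) :
    ∀ ω : ℝ,
      (∑' k : ℤ, (‖F (ω + (k : ℝ) * (2 * π * b))‖₊ : ℝ≥0∞) ^ 2) =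
        (‖dtSAFT a b d p q cseq ω‖₊ : ℝ≥0∞) ^ 2 *
          ∑' k : ℤ, (‖SAFT a b d p q φ (ω + (k : ℝ) * (2 * π * b))‖₊ : ℝ≥0∞) ^ 2 := by
  intro ω
  have hterm : ∀ k : ℤ,
      (‖F (ω + (k : ℝ) * (2 * π * b))‖₊ : ℝ≥0∞) ^ 2 =
      (‖dtSAFT a b d p q cseq ω‖₊ : ℝ≥0∞) ^ 2 *
        (‖SAFT a b d p q φ (ω + (k : ℝ) * (2 * π * b))‖₊ : ℝ≥0∞) ^ 2 := by
    intro k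
    have h2 : ((2 : ℂ) * b) = ((2 * b : ℝ) : ℂ) := by push_cast; ring
    rw [hF, nnnorm_mul, nnnorm_mul, h2, unimod', dtSAFT_shift a b d p q hb cseq ω k]
    push_cast
    ring
  simp_rw [hterm]
  rw [ENNReal.tsum_mul_left]
end

section
/- Poisson summation formula for the SAFT: let f : ℝ → ℂ be a Schwartz function with SAFT F_A. Then for every t ∈ ℝ, sqrt(2πb) · Σ_{k∈ℤ} f(t + k·Δ) · exp((Complex.I/(2b)) · (a·(t + k·Δ)² + 2·p·(t + k·Δ))) = Σ_{n∈ℤ} exp(−(Complex.I/(2b)) · (d·n² + Ω·n − 2·n·t)) · F_A(n). -/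
open MeasureTheory Real

lemma norm_eval_le (P : Polynomial ℂ) (z : ℂ) :
    ‖P.eval z‖ ≤ (∑ i ∈ Finset.range (P.natDegree + 1), ‖P.coeff i‖) * (1 + ‖z‖) ^ P.natDegree := by
  rw [Polynomial.eval_eq_sum_range]
  refine (norm_sum_le _ _).trans ?_
  rw [Finset.sum_mul]
  refine Finset.sum_le_sum fun i hi => ?_
  rw [norm_mul, norm_pow]
  refine mul_le_mul_of_nonneg_left ?_ (norm_nonneg _)
  have h1 : (0:ℝ) ≤ ‖z‖ := norm_nonneg z
  calc ‖z‖ ^ i ≤ (1 + ‖z‖) ^ i := by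
        exact pow_le_pow_left₀ h1 (by linarith) i
    _ ≤ (1 + ‖z‖) ^ P.natDegree := by
        exact pow_le_pow_right₀ (by linarith) (by
          have := Finset.mem_range.mp hi; omega)

lemma hasTemperateGrowth_exp_quad (α β : ℝ) :
    Function.HasTemperateGrowth
      (fun x : ℝ => Complex.exp (Complex.I * ((α * x ^ 2 + β * x : ℝ) : ℂ))) := by
  set e : ℝ → ℂ := fun x => Complex.exp (Complex.I * ((α * x ^ 2 + β * x : ℝ) : ℂ)) with he
  have norm_e : ∀ x : ℝ, ‖e x‖ = 1 := by
    intro x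
    rw [he]
    simp only []
    rw [mul_comm, Complex.norm_exp_ofReal_mul_I]
  have hderiv : ∀ x : ℝ, HasDerivAt e (Complex.I * ((2 * α * x + β : ℝ) : ℂ) * e x) x := by
    intro x
    have h0 : HasDerivAt (fun x : ℝ => α * x ^ 2 + β * x) (2 * α * x + β) x := by
      have := ((hasDerivAt_pow 2 x).const_mul α).add ((hasDerivAt_id x).const_mul β)
      refine this.congr_deriv ?_
      norm_num
      ring
    have h1 := (h0.ofReal_comp.const_mul Complex.I).cexp
    convert h1 using 1
    rw [he]
    ring
  classical
  let q : Polynomial ℂ := Polynomial.C (Complex.I * (2 * α)) * Polynomial.X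
      + Polynomial.C (Complex.I * β)
  let P : ℕ → Polynomial ℂ := fun n => Nat.rec 1 (fun _ pn => pn.derivative + q * pn) n
  have hq : ∀ x : ℝ, q.eval (x : ℂ) = Complex.I * ((2 * α * x + β : ℝ) : ℂ) := by
    intro x
    simp [q]
    push_cast
    ring
  have key : ∀ n, iteratedDeriv n e = fun x : ℝ => (P n).eval (x : ℂ) * e x := by
    intro n
    induction n with
    | zero => simp [P]
    | succ n ih =>
      rw [iteratedDeriv_succ, ih]
      funext x
      have h1 : HasDerivAt (fun x : ℝ => (P n).eval (x : ℂ)) ((P n).derivative.eval (x : ℂ)) x :=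
        ((P n).hasDerivAt (x : ℂ)).comp_ofReal
      have h2 := h1.mul (hderiv x)
      rw [(show HasDerivAt (fun y : ℝ => (P n).eval (y : ℂ) * e y) _ x from h2).deriv]
      have hPs : P (n + 1) = (P n).derivative + q * (P n) := rfl
      rw [hPs, Polynomial.eval_add, Polynomial.eval_mul, hq x]
      ring
  refine ⟨?_, fun n => ?_⟩
  · rw [he]
    apply Complex.contDiff_exp.comp
    exact contDiff_const.mul (Complex.ofRealCLM.contDiff.comp
      (((contDiff_const.mul (contDiff_id.pow 2))).add (contDiff_const.mul contDiff_id)))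
  refine ⟨(P n).natDegree, ∑ i ∈ Finset.range ((P n).natDegree + 1), ‖(P n).coeff i‖, fun x => ?_⟩
  rw [norm_iteratedFDeriv_eq_norm_iteratedDeriv, key n]
  simp only [norm_mul, norm_e, mul_one]
  simpa using norm_eval_le (P n) (x : ℂ)

open FourierTransform in
/-- Poisson summation formula for the SAFT, with `Δ = 2πb` and `Ω = 2*(b*q - d*p)`. -/
theorem saft_poisson_summation (a b c d p q : ℝ) (hb : 0 < b) (habcd : a * d - b * c = 1)
    (f : SchwartzMap ℝ ℂ) :
    ∀ t : ℝ,
      (Real.sqrt (2 * π * b) : ℂ) *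
        ∑' k : ℤ, f (t + (k : ℝ) * (2 * π * b)) *
          Complex.exp (Complex.I / (2 * b) *
            ((a * (t + (k : ℝ) * (2 * π * b)) ^ 2 + 2 * p * (t + (k : ℝ) * (2 * π * b)) : ℝ) : ℂ)) =
      ∑' n : ℤ, Complex.exp (-(Complex.I / (2 * b)) *
          ((d * (n : ℝ) ^ 2 + 2 * (b * q - d * p) * (n : ℝ) - 2 * (n : ℝ) * t : ℝ) : ℂ)) *
        SAFT a b d p q (fun x => f x) (n : ℝ) := by
  intro t
  have hb' : b ≠ 0 := hb.ne'
  have hbC : (b : ℂ) ≠ 0 := by exact_mod_cast hb'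
  have hπC : (π : ℂ) ≠ 0 := by exact_mod_cast Real.pi_ne_zero
  have hΔpos : 0 < 2 * π * b := by positivity
  set Δ : ℝ := 2 * π * b with hΔdef
  have hΔ : Δ ≠ 0 := hΔpos.ne'
  have hΔC : (Δ : ℂ) ≠ 0 := by exact_mod_cast hΔ
  have hsqrt_pos : 0 < Real.sqrt Δ := Real.sqrt_pos.mpr hΔpos
  have hsq : Real.sqrt Δ * Real.sqrt Δ = Δ := Real.mul_self_sqrt hΔpos.le
  have hsqC : (Real.sqrt Δ : ℂ) * (Real.sqrt Δ : ℂ) = (Δ : ℂ) := by exact_mod_cast hsq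
  have hsne : (Real.sqrt Δ : ℂ) ≠ 0 := by exact_mod_cast hsqrt_pos.ne'
  have hs : (Real.sqrt Δ : ℂ) * ((Δ : ℂ))⁻¹ = ((Real.sqrt Δ : ℂ))⁻¹ := by
    rw [← hsqC, mul_inv, ← mul_assoc, mul_inv_cancel₀ hsne, one_mul]
  have hTG := hasTemperateGrowth_exp_quad (a / (2 * b)) (p / b)
  set g : SchwartzMap ℝ ℂ := SchwartzMap.bilinLeftCLM (ContinuousLinearMap.mul ℝ ℂ) hTG f
    with hgdef
  have hg : ∀ x : ℝ, g x
      = f x * Complex.exp (Complex.I / (2 * b) * ((a * x ^ 2 + 2 * p * x : ℝ) : ℂ)) := by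
    intro x
    have h1 : g x = f x * Complex.exp
        (Complex.I * ((a / (2 * b) * x ^ 2 + p / b * x : ℝ) : ℂ)) := rfl
    rw [h1]
    congr 2
    push_cast
    field_simp
  set E : ℝ ≃L[ℝ] ℝ := (LinearEquiv.smulOfNeZero ℝ ℝ Δ hΔ).toContinuousLinearEquiv with hE
  set h : SchwartzMap ℝ ℂ := SchwartzMap.compCLMOfContinuousLinearEquiv ℝ E g with hhdef
  have hh : ∀ x : ℝ, h x = g (Δ * x) := fun x => rfl
  -- Fourier transform of h in terms of g
  have hFh : ∀ n : ℤ, 𝓕 (⇑h) (n : ℝ) = (Δ : ℂ)⁻¹ * 𝓕 (⇑g) ((n : ℝ) / Δ) := by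
    intro n
    rw [Real.fourier_real_eq_integral_exp_smul,
      Real.fourier_real_eq_integral_exp_smul]
    have key : ∀ x : ℝ, Complex.exp (↑(-2 * π * x * (n : ℝ)) * Complex.I) • h x
        = (fun y : ℝ => Complex.exp (↑(-2 * π * y * ((n : ℝ) / Δ)) * Complex.I) • g y)
            (Δ * x) := by
      intro x
      simp only [hh]
      have harg : -2 * π * (Δ * x) * ((n : ℝ) / Δ) = -2 * π * x * (n : ℝ) := by
        field_simp
      rw [harg]
    simp_rw [key]
    rw [MeasureTheory.Measure.integral_comp_mul_left
      (fun y : ℝ => Complex.exp (↑(-2 * π * y * ((n : ℝ) / Δ)) * Complex.I) • g y) Δ]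
    rw [abs_of_pos (inv_pos.mpr hΔpos)]
    rw [Complex.real_smul, Complex.ofReal_inv]
  -- SAFT in terms of the Fourier transform of g
  have hSAFT : ∀ n : ℤ, SAFT a b d p q (fun x => f x) (n : ℝ)
      = ((Real.sqrt Δ : ℂ))⁻¹ *
        (Complex.exp (Complex.I / (2 * b) *
            ((d * (n : ℝ) ^ 2 + 2 * (b * q - d * p) * (n : ℝ) : ℝ) : ℂ)) *
         𝓕 (⇑g) ((n : ℝ) / Δ)) := by
    intro n
    rw [SAFT, ← hΔdef]
    have key : ∀ x : ℝ, f x * Complex.exp (Complex.I / (2 * b) *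
        ((a * x ^ 2 + d * (n : ℝ) ^ 2 - 2 * x * (n : ℝ) + 2 * p * x
          + 2 * (b * q - d * p) * (n : ℝ) : ℝ) : ℂ))
        = Complex.exp (Complex.I / (2 * b) *
            ((d * (n : ℝ) ^ 2 + 2 * (b * q - d * p) * (n : ℝ) : ℝ) : ℂ)) *
          (Complex.exp (↑(-2 * π * x * ((n : ℝ) / Δ)) * Complex.I) • g x) := by
      intro x
      rw [hg x, smul_eq_mul]
      have hreal : (a * x ^ 2 + d * (n : ℝ) ^ 2 - 2 * x * (n : ℝ) + 2 * p * x
            + 2 * (b * q - d * p) * (n : ℝ) : ℝ)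
          = (d * (n : ℝ) ^ 2 + 2 * (b * q - d * p) * (n : ℝ))
            + ((-2 * π * x * ((n : ℝ) / Δ)) * (2 * b) + (a * x ^ 2 + 2 * p * x)) := by
        rw [hΔdef]
        field_simp
        ring
      have hexp : Complex.I / (2 * b) *
          ((a * x ^ 2 + d * (n : ℝ) ^ 2 - 2 * x * (n : ℝ) + 2 * p * x
            + 2 * (b * q - d * p) * (n : ℝ) : ℝ) : ℂ)
          = Complex.I / (2 * b) *
              ((d * (n : ℝ) ^ 2 + 2 * (b * q - d * p) * (n : ℝ) : ℝ) : ℂ)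
            + (((-2 * π * x * ((n : ℝ) / Δ) : ℝ) : ℂ) * Complex.I
              + Complex.I / (2 * b) * ((a * x ^ 2 + 2 * p * x : ℝ) : ℂ)) := by
        rw [hreal]
        push_cast
        field_simp
      rw [hexp, Complex.exp_add, Complex.exp_add]
      ring
    simp_rw [key]
    rw [MeasureTheory.integral_const_mul, ← Real.fourier_real_eq_integral_exp_smul]
  -- termwise identification of the left-hand side
  have hterm : ∀ k : ℤ, f (t + (k : ℝ) * Δ) * Complex.exp (Complex.I / (2 * b) *
      ((a * (t + (k : ℝ) * Δ) ^ 2 + 2 * p * (t + (k : ℝ) * Δ) : ℝ) : ℂ))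
      = h (t / Δ + (k : ℝ)) := by
    intro k
    rw [hh, ← hg]
    congr 2 <;> · field_simp
  -- the `fourier` factor
  have hfour : ∀ n : ℤ, (fourier n (↑(t / Δ) : UnitAddCircle) : ℂ)
      = Complex.exp (Complex.I / (2 * b) * ((2 * (n : ℝ) * t : ℝ) : ℂ)) := by
    intro n
    rw [fourier_coe_apply]
    congr 1
    rw [hΔdef]
    push_cast
    field_simp
  have hpois := SchwartzMap.tsum_eq_tsum_fourier h (t / Δ)
  calc (Real.sqrt Δ : ℂ) * ∑' k : ℤ, f (t + (k : ℝ) * Δ) *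
        Complex.exp (Complex.I / (2 * b) *
          ((a * (t + (k : ℝ) * Δ) ^ 2 + 2 * p * (t + (k : ℝ) * Δ) : ℝ) : ℂ))
      = (Real.sqrt Δ : ℂ) * ∑' k : ℤ, h (t / Δ + (k : ℝ)) := by
        rw [tsum_congr hterm]
    _ = (Real.sqrt Δ : ℂ) * ∑' n : ℤ, SchwartzMap.fourierTransformCLM ℝ h (n : ℝ) *
          fourier n (↑(t / Δ) : UnitAddCircle) := by rw [hpois]; rfl
    _ = ∑' n : ℤ, Complex.exp (-(Complex.I / (2 * b)) *
          ((d * (n : ℝ) ^ 2 + 2 * (b * q - d * p) * (n : ℝ) - 2 * (n : ℝ) * t : ℝ) : ℂ)) *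
        SAFT a b d p q (fun x => f x) (n : ℝ) := by
        rw [← tsum_mul_left]
        refine tsum_congr fun n => ?_
        rw [SchwartzMap.fourierTransformCLM_apply, SchwartzMap.fourier_coe, hFh n, hSAFT n, hfour n]
        have hEe : Complex.exp (-(Complex.I / (2 * b)) *
              ((d * (n : ℝ) ^ 2 + 2 * (b * q - d * p) * (n : ℝ) - 2 * (n : ℝ) * t : ℝ) : ℂ)) *
            Complex.exp (Complex.I / (2 * b) *
              ((d * (n : ℝ) ^ 2 + 2 * (b * q - d * p) * (n : ℝ) : ℝ) : ℂ))
            = Complex.exp (Complex.I / (2 * b) * ((2 * (n : ℝ) * t : ℝ) : ℂ)) := by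
          rw [← Complex.exp_add]
          congr 1
          push_cast
          ring
        linear_combination ((𝓕 (⇑g) ((n : ℝ) / Δ)) *
            Complex.exp (Complex.I / (2 * b) * ((2 * (n : ℝ) * t : ℝ) : ℂ))) * hs
          - ((Real.sqrt Δ : ℂ))⁻¹ * (𝓕 (⇑g) ((n : ℝ) / Δ)) * hEe
end

section
/- Interpolating case of the SAFT Poisson summation formula: let f : ℝ → ℂ be a Schwartz function whose SAFT F_A satisfies F_A(0) = 1 and F_A(n) = 0 for every nonzero integer n. Then for every t ∈ ℝ, Σ_{k∈ℤ} f(t + k·Δ) · exp((Complex.I/(2b)) · (a·(t + k·Δ)² + 2·p·(t + k·Δ))) = (2πb)^(−1/2). -/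
open MeasureTheory Real

/-- Interpolating case of the SAFT Poisson summation formula, with `Δ = 2πb`. -/
theorem saft_poisson_interpolating (a b c d p q : ℝ) (hb : 0 < b) (habcd : a * d - b * c = 1)
    (f : SchwartzMap ℝ ℂ)
    (h0 : SAFT a b d p q (fun x => f x) 0 = 1)
    (hn : ∀ n : ℤ, n ≠ 0 → SAFT a b d p q (fun x => f x) (n : ℝ) = 0) :
    ∀ t : ℝ,
      (∑' k : ℤ, f (t + (k : ℝ) * (2 * π * b)) *
        Complex.exp (Complex.I / (2 * b) *
          ((a * (t + (k : ℝ) * (2 * π * b)) ^ 2 + 2 * p * (t + (k : ℝ) * (2 * π * b)) : ℝ) : ℂ))) =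
      (Real.sqrt (2 * π * b) : ℂ)⁻¹ := by
  intro t
  have hπ : 0 < π := Real.pi_pos
  have hΔ : 0 < 2 * π * b := by positivity
  have hbC : (b : ℂ) ≠ 0 := by exact_mod_cast hb.ne'
  set g : ℝ → ℂ := fun x => f x * Complex.exp (Complex.I / (2 * b) *
      ((a * x ^ 2 + 2 * p * x : ℝ) : ℂ)) with hg
  -- Fourier transform of the rescaled function in terms of SAFT
  have key : ∀ ω : ℝ, FourierTransform.fourier (fun x : ℝ => g ((2 * π * b) * x)) ω
      = ((2 * π * b : ℝ) : ℂ)⁻¹ * (Real.sqrt (2 * π * b) : ℂ) *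
        (Complex.exp (Complex.I / (2 * b) *
          ((d * ω ^ 2 + 2 * (b * q - d * p) * ω : ℝ) : ℂ)))⁻¹ *
        SAFT a b d p q (fun x => f x) ω := by
    intro ω
    rw [Real.fourier_real_eq_integral_exp_smul]
    have step1 : (fun x : ℝ => Complex.exp (((-2 * π * x * ω : ℝ) : ℂ) * Complex.I)
          • g ((2 * π * b) * x))
        = fun x : ℝ => (fun u : ℝ => g u *
            Complex.exp (((-(u * ω) / b : ℝ) : ℂ) * Complex.I)) ((2 * π * b) * x) := by
      funext x
      simp only [smul_eq_mul]
      rw [mul_comm]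
      congr 3
      push_cast
      field_simp
    rw [step1, MeasureTheory.Measure.integral_comp_mul_left
      (fun u : ℝ => g u * Complex.exp (((-(u * ω) / b : ℝ) : ℂ) * Complex.I)) (2 * π * b)]
    have step2 : (∫ u : ℝ, g u * Complex.exp (((-(u * ω) / b : ℝ) : ℂ) * Complex.I))
        = (Complex.exp (Complex.I / (2 * b) *
            ((d * ω ^ 2 + 2 * (b * q - d * p) * ω : ℝ) : ℂ)))⁻¹ *
          ∫ u : ℝ, f u * Complex.exp (Complex.I / (2 * b) *
            ((a * u ^ 2 + d * ω ^ 2 - 2 * u * ω + 2 * p * u + 2 * (b * q - d * p) * ω : ℝ) : ℂ)) := by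
      rw [← MeasureTheory.integral_const_mul]
      congr 1
      funext u
      have hE : Complex.exp (Complex.I / (2 * b) * ((a * u ^ 2 + 2 * p * u : ℝ) : ℂ)) *
            Complex.exp (((-(u * ω) / b : ℝ) : ℂ) * Complex.I)
          = (Complex.exp (Complex.I / (2 * b) *
              ((d * ω ^ 2 + 2 * (b * q - d * p) * ω : ℝ) : ℂ)))⁻¹ *
            Complex.exp (Complex.I / (2 * b) *
              ((a * u ^ 2 + d * ω ^ 2 - 2 * u * ω + 2 * p * u
                + 2 * (b * q - d * p) * ω : ℝ) : ℂ)) := by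
        rw [← Complex.exp_add, ← Complex.exp_neg, ← Complex.exp_add]
        congr 1
        push_cast
        field_simp
        ring
      calc g u * Complex.exp (((-(u * ω) / b : ℝ) : ℂ) * Complex.I)
          = f u * (Complex.exp (Complex.I / (2 * b) * ((a * u ^ 2 + 2 * p * u : ℝ) : ℂ)) *
              Complex.exp (((-(u * ω) / b : ℝ) : ℂ) * Complex.I)) := by
            rw [hg]; ring
        _ = f u * ((Complex.exp (Complex.I / (2 * b) *
              ((d * ω ^ 2 + 2 * (b * q - d * p) * ω : ℝ) : ℂ)))⁻¹ *
            Complex.exp (Complex.I / (2 * b) *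
              ((a * u ^ 2 + d * ω ^ 2 - 2 * u * ω + 2 * p * u
                + 2 * (b * q - d * p) * ω : ℝ) : ℂ))) := by rw [hE]
        _ = _ := by ring
    rw [step2, SAFT]
    have hs : (Real.sqrt (2 * π * b) : ℂ) ≠ 0 := by
      exact_mod_cast (Real.sqrt_pos.mpr hΔ).ne'
    rw [abs_of_pos (inv_pos.mpr hΔ), Complex.real_smul, Complex.ofReal_inv]
    have aux : ∀ (J E s c : ℂ), s ≠ 0 → c⁻¹ * s * E⁻¹ * (s⁻¹ * J) = c⁻¹ * (E⁻¹ * J) := by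
      intro J E s c hs0
      calc c⁻¹ * s * E⁻¹ * (s⁻¹ * J) = (s * s⁻¹) * (c⁻¹ * (E⁻¹ * J)) := by ring
        _ = c⁻¹ * (E⁻¹ * J) := by rw [mul_inv_cancel₀ hs0, one_mul]
    exact (aux _ _ _ _ hs).symm
  -- norm of g
  have hnorm : ∀ u : ℝ, ‖g u‖ = ‖f u‖ := by
    intro u
    rw [hg]
    have : Complex.I / (2 * b) * ((a * u ^ 2 + 2 * p * u : ℝ) : ℂ)
        = (((a * u ^ 2 + 2 * p * u) / (2 * b) : ℝ) : ℂ) * Complex.I := by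
      push_cast; ring
    rw [norm_mul, this, Complex.norm_exp_ofReal_mul_I, mul_one]
  -- continuity
  have hc : Continuous fun x : ℝ => g ((2 * π * b) * x) := by
    have hginner : Continuous fun u : ℝ => Complex.I / (2 * b) *
        ((a * u ^ 2 + 2 * p * u : ℝ) : ℂ) := by
      apply continuous_const.mul
      exact Complex.continuous_ofReal.comp (by continuity)
    exact (f.continuous.mul (Complex.continuous_exp.comp hginner)).comp
      (continuous_const.mul continuous_id)
  -- decay
  have hdecay : (fun x : ℝ => g ((2 * π * b) * x)) =O[Filter.cocompact ℝ]
      fun x : ℝ => |x| ^ (-2 : ℝ) := by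
    have h1 : (fun x : ℝ => f ((2 * π * b) * x)) =O[Filter.cocompact ℝ]
        fun x : ℝ => ‖(2 * π * b) * x‖ ^ (-2 : ℝ) :=
      (f.isBigO_cocompact_rpow (-2)).comp_tendsto
        (Filter.tendsto_cocompact_mul_left₀ hΔ.ne')
    have h2 : (fun x : ℝ => ‖(2 * π * b) * x‖ ^ (-2 : ℝ))
        = fun x : ℝ => (2 * π * b) ^ (-2 : ℝ) * |x| ^ (-2 : ℝ) := by
      funext x
      rw [Real.norm_eq_abs, abs_mul, abs_of_pos hΔ,
        Real.mul_rpow hΔ.le (abs_nonneg x)]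
    have h3 : (fun x : ℝ => g ((2 * π * b) * x)) =O[Filter.cocompact ℝ]
        fun x : ℝ => f ((2 * π * b) * x) :=
      Asymptotics.isBigO_of_le _ (fun x => (hnorm _).le)
    refine h3.trans (h1.trans ?_)
    rw [h2]
    exact Asymptotics.isBigO_const_mul_self _ _ _
  -- summability of Fourier coefficients
  have hFf : Summable fun n : ℤ => FourierTransform.fourier (fun x : ℝ => g ((2 * π * b) * x)) n := by
    apply summable_of_ne_finset_zero (s := ({0} : Finset ℤ))
    intro n hns
    have hn0 : n ≠ 0 := by simpa using hns
    rw [key, hn n hn0, mul_zero]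
  have PS := Real.tsum_eq_tsum_fourier_of_rpow_decay_of_summable hc one_lt_two
    hdecay hFf (t / (2 * π * b))
  have hL : (∑' k : ℤ, f (t + (k : ℝ) * (2 * π * b)) *
        Complex.exp (Complex.I / (2 * b) *
          ((a * (t + (k : ℝ) * (2 * π * b)) ^ 2 + 2 * p * (t + (k : ℝ) * (2 * π * b)) : ℝ) : ℂ)))
      = ∑' n : ℤ, (fun x : ℝ => g ((2 * π * b) * x)) (t / (2 * π * b) + n) := by
    apply tsum_congr
    intro k
    have : (2 * π * b) * (t / (2 * π * b) + (k : ℝ)) = t + (k : ℝ) * (2 * π * b) := by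
      field_simp
    simp only [this, hg]
  rw [hL, PS]
  rw [tsum_eq_single 0]
  · have h00 : ((d * (0:ℝ) ^ 2 + 2 * (b * q - d * p) * (0:ℝ) : ℝ) : ℂ) = 0 := by
      push_cast; ring
    rw [Int.cast_zero, key 0, h00, h0]
    simp only [mul_zero, Complex.exp_zero, inv_one, mul_one, fourier_zero]
    have hs : (Real.sqrt (2 * π * b) : ℂ) ≠ 0 := by
      exact_mod_cast (Real.sqrt_pos.mpr hΔ).ne'
    have hm : (Real.sqrt (2 * π * b) : ℂ) * (Real.sqrt (2 * π * b) : ℂ) = ((2 * π * b : ℝ) : ℂ) := by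
      exact_mod_cast congrArg Complex.ofReal (Real.mul_self_sqrt hΔ.le)
    rw [← hm, mul_inv, mul_assoc, inv_mul_cancel₀ hs, mul_one]
  · intro n hn0
    rw [key, hn n hn0, mul_zero, zero_mul]
end

section
/- Reproducing-kernel property of the SAFT-bandlimited space: let σ > 0 and let f : ℝ → ℂ be continuous, in L¹(ℝ) ∩ L²(ℝ), whose SAFT F_A vanishes outside [−σ, σ]. Then for every t ∈ ℝ, f(t) = ∫_ℝ f(x) · exp((Complex.I/(2b)) · (a·(x² − t²) + 2·p·(x − t))) · sin(σ·(x − t)/b)/(π·(x − t)) dx, where the kernel value at x = t is taken to be σ/(πb). -/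
open MeasureTheory Real

open FourierTransform

private lemma phase_norm (b r : ℝ) : ‖Complex.exp (Complex.I / (2 * b) * (r : ℂ))‖ = 1 := by
  have h : Complex.I / (2 * (b : ℂ)) * (r : ℂ) = ((r / (2 * b) : ℝ) : ℂ) * Complex.I := by
    push_cast
    ring
  rw [h, Complex.norm_exp_ofReal_mul_I]

/-- Reproducing-kernel property of the space of functions bandlimited to `[-σ, σ]`
in the SAFT domain; the diagonal value of the kernel is `σ/(πb)`. -/
theorem saft_reproducing_kernel (a b c d p q : ℝ) (hb : 0 < b) (habcd : a * d - b * c = 1)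
    (σ : ℝ) (hσ : 0 < σ)
    (f : ℝ → ℂ) (hfc : Continuous f) (hf1 : Integrable f) (hf2 : MemLp f 2 volume)
    (hband : ∀ ω : ℝ, σ < |ω| → SAFT a b d p q f ω = 0) :
    ∀ t : ℝ, f t =
      ∫ x : ℝ, f x *
        Complex.exp (Complex.I / (2 * b) * ((a * (x ^ 2 - t ^ 2) + 2 * p * (x - t) : ℝ) : ℂ)) *
        (if x = t then ((σ / (π * b) : ℝ) : ℂ)
          else ((Real.sin (σ * (x - t) / b) / (π * (x - t)) : ℝ) : ℂ)) := by
  intro t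
  have hπ : (0 : ℝ) < π := Real.pi_pos
  have hbne : (b : ℂ) ≠ 0 := Complex.ofReal_ne_zero.2 hb.ne'
  set cc : ℝ := σ / (2 * π * b) with hccdef
  have hccpos : 0 < cc := by positivity
  set φ : ℝ → ℂ := fun x =>
    Complex.exp (Complex.I / (2 * b) * ((a * x ^ 2 + 2 * p * x : ℝ) : ℂ)) with hφdef
  have hφnorm : ∀ x, ‖φ x‖ = 1 := fun x => phase_norm b _
  have hφcont : Continuous φ := by
    apply Complex.continuous_exp.comp
    fun_prop
  set g : ℝ → ℂ := fun x => f x * φ x with hgdef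
  have hgcont : Continuous g := hfc.mul hφcont
  have hgint : Integrable g := by
    refine hf1.norm.mono' hgcont.aestronglyMeasurable (Filter.Eventually.of_forall fun x => ?_)
    show ‖f x * φ x‖ ≤ ‖f x‖
    rw [norm_mul, hφnorm, mul_one]
  -- band limitation for the Fourier transform of g
  have hband' : ∀ ξ : ℝ, cc < |ξ| → 𝓕 g ξ = 0 := by
    intro ξ hξ
    set ω : ℝ := 2 * π * b * ξ with hωdef
    have hωabs : σ < |ω| := by
      have h1 : |ω| = 2 * π * b * |ξ| := by
        rw [hωdef, abs_mul, abs_of_pos (by positivity : (0 : ℝ) < 2 * π * b)]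
      rw [h1]
      calc σ = 2 * π * b * cc := by rw [hccdef]; field_simp
        _ < 2 * π * b * |ξ| := by
          exact mul_lt_mul_of_pos_left hξ (by positivity)
    have h0 := hband ω hωabs
    rw [SAFT] at h0
    have hsq : ((Real.sqrt (2 * π * b) : ℝ) : ℂ) ≠ 0 :=
      Complex.ofReal_ne_zero.2 (ne_of_gt (Real.sqrt_pos.2 (by positivity)))
    have hint0 : (∫ v : ℝ, f v * Complex.exp (Complex.I / (2 * b) *
        ((a * v ^ 2 + d * ω ^ 2 - 2 * v * ω + 2 * p * v + 2 * (b * q - d * p) * ω : ℝ) : ℂ)))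
        = 0 := by
      rcases mul_eq_zero.1 h0 with h | h
      · exact absurd h (inv_ne_zero hsq)
      · exact h
    rw [Real.fourier_real_eq_integral_exp_smul]
    have key : ∀ v : ℝ, Complex.exp (↑(-2 * π * v * ξ) * Complex.I) • g v =
        Complex.exp (-(Complex.I / (2 * b)) *
          ((d * ω ^ 2 + 2 * (b * q - d * p) * ω : ℝ) : ℂ)) *
        (f v * Complex.exp (Complex.I / (2 * b) *
          ((a * v ^ 2 + d * ω ^ 2 - 2 * v * ω + 2 * p * v + 2 * (b * q - d * p) * ω : ℝ) : ℂ))) := by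
      intro v
      simp only [smul_eq_mul]
      have hE : (↑(-2 * π * v * ξ) * Complex.I) +
          (Complex.I / (2 * b) * ((a * v ^ 2 + 2 * p * v : ℝ) : ℂ)) =
          (-(Complex.I / (2 * b)) * ((d * ω ^ 2 + 2 * (b * q - d * p) * ω : ℝ) : ℂ)) +
          (Complex.I / (2 * b) *
            ((a * v ^ 2 + d * ω ^ 2 - 2 * v * ω + 2 * p * v + 2 * (b * q - d * p) * ω : ℝ) : ℂ)) := by
        rw [hωdef]
        push_cast
        field_simp
        ring
      have h2 : Complex.exp (↑(-2 * π * v * ξ) * Complex.I) *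
          Complex.exp (Complex.I / (2 * b) * ((a * v ^ 2 + 2 * p * v : ℝ) : ℂ)) =
          Complex.exp (-(Complex.I / (2 * b)) *
            ((d * ω ^ 2 + 2 * (b * q - d * p) * ω : ℝ) : ℂ)) *
          Complex.exp (Complex.I / (2 * b) *
            ((a * v ^ 2 + d * ω ^ 2 - 2 * v * ω + 2 * p * v + 2 * (b * q - d * p) * ω : ℝ) : ℂ)) := by
        rw [← Complex.exp_add, ← Complex.exp_add, hE]
      calc Complex.exp (↑(-2 * π * v * ξ) * Complex.I) * g v
          = f v * (Complex.exp (↑(-2 * π * v * ξ) * Complex.I) *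
              Complex.exp (Complex.I / (2 * b) * ((a * v ^ 2 + 2 * p * v : ℝ) : ℂ))) := by
            show Complex.exp (↑(-2 * π * v * ξ) * Complex.I) *
              (f v * Complex.exp (Complex.I / (2 * b) * ((a * v ^ 2 + 2 * p * v : ℝ) : ℂ))) = _
            ring
        _ = f v * (Complex.exp (-(Complex.I / (2 * b)) *
              ((d * ω ^ 2 + 2 * (b * q - d * p) * ω : ℝ) : ℂ)) *
            Complex.exp (Complex.I / (2 * b) *
              ((a * v ^ 2 + d * ω ^ 2 - 2 * v * ω + 2 * p * v + 2 * (b * q - d * p) * ω : ℝ) : ℂ))) := by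
            rw [h2]
        _ = _ := by ring
    calc (∫ v : ℝ, Complex.exp (↑(-2 * π * v * ξ) * Complex.I) • g v)
        = ∫ v : ℝ, Complex.exp (-(Complex.I / (2 * b)) *
            ((d * ω ^ 2 + 2 * (b * q - d * p) * ω : ℝ) : ℂ)) *
          (f v * Complex.exp (Complex.I / (2 * b) *
            ((a * v ^ 2 + d * ω ^ 2 - 2 * v * ω + 2 * p * v + 2 * (b * q - d * p) * ω : ℝ) : ℂ))) :=
          integral_congr_ae (Filter.Eventually.of_forall key)
      _ = Complex.exp (-(Complex.I / (2 * b)) *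
            ((d * ω ^ 2 + 2 * (b * q - d * p) * ω : ℝ) : ℂ)) *
          ∫ v : ℝ, f v * Complex.exp (Complex.I / (2 * b) *
            ((a * v ^ 2 + d * ω ^ 2 - 2 * v * ω + 2 * p * v + 2 * (b * q - d * p) * ω : ℝ) : ℂ)) :=
          integral_const_mul _ _
      _ = 0 := by rw [hint0, mul_zero]
  -- Fourier transform of g is continuous, compactly supported, integrable
  have hFcont : Continuous (𝓕 g) :=
    VectorFourier.fourierIntegral_continuous Real.continuous_fourierChar
      (by exact continuous_inner) hgint
  have hsupp : HasCompactSupport (𝓕 g) := by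
    apply HasCompactSupport.intro (isCompact_Icc (a := -cc) (b := cc))
    intro ξ hξ
    refine hband' ξ ?_
    by_contra h
    push_neg at h
    exact hξ (Set.mem_Icc.2 (abs_le.1 h))
  have hFint : Integrable (𝓕 g) := hFcont.integrable_of_hasCompactSupport hsupp
  -- Fourier inversion
  have hinv : g t = ∫ ξ : ℝ, Complex.exp (↑(2 * π * ξ * t) * Complex.I) * 𝓕 g ξ := by
    conv_lhs => rw [← hgcont.fourierInv_fourier_eq hgint hFint]
    rw [Real.fourierInv_eq_fourier_neg,
      Real.fourier_real_eq_integral_exp_smul]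
    refine integral_congr_ae (Filter.Eventually.of_forall fun ξ => ?_)
    simp only [smul_eq_mul]
    rw [show (-2 * π * ξ * -t : ℝ) = 2 * π * ξ * t by ring]
  have hrestrict : (∫ ξ : ℝ, Complex.exp (↑(2 * π * ξ * t) * Complex.I) * 𝓕 g ξ)
      = ∫ ξ in Set.Icc (-cc) cc, Complex.exp (↑(2 * π * ξ * t) * Complex.I) * 𝓕 g ξ := by
    refine (setIntegral_eq_integral_of_forall_compl_eq_zero fun ξ hξ => ?_).symm
    have h0 : 𝓕 g ξ = 0 := by
      refine hband' ξ ?_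
      by_contra h
      push_neg at h
      exact hξ (Set.mem_Icc.2 (abs_le.1 h))
    rw [h0, mul_zero]
  -- the kernel as an integral over [-cc, cc]
  have hker : ∀ x : ℝ,
      (if x = t then ((σ / (π * b) : ℝ) : ℂ)
        else ((Real.sin (σ * (x - t) / b) / (π * (x - t)) : ℝ) : ℂ))
      = ∫ ξ in Set.Icc (-cc) cc, Complex.exp (↑(2 * π * (t - x) * ξ) * Complex.I) := by
    intro x
    by_cases hx : x = t
    · subst hx
      rw [if_pos rfl]
      have h0 : ∀ ξ : ℝ, Complex.exp (↑(2 * π * (x - x) * ξ) * Complex.I) = (1 : ℂ) := by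
        intro ξ
        rw [sub_self, mul_zero, zero_mul, Complex.ofReal_zero, zero_mul, Complex.exp_zero]
      rw [show (fun ξ : ℝ => Complex.exp (↑(2 * π * (x - x) * ξ) * Complex.I))
          = fun _ : ℝ => (1 : ℂ) from funext h0]
      rw [setIntegral_const, Real.volume_real_Icc_of_le (by linarith),
        Complex.real_smul, mul_one]
      norm_cast
      rw [hccdef]
      field_simp
      ring
    · rw [if_neg hx]
      have hxt : (x : ℝ) - t ≠ 0 := sub_ne_zero.2 hx
      have hm : ((2 * π * (t - x) : ℝ) : ℂ) * Complex.I ≠ 0 := by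
        apply mul_ne_zero _ Complex.I_ne_zero
        rw [Complex.ofReal_ne_zero]
        have : t - x ≠ 0 := fun h => hxt (by linarith [sub_eq_zero.1 h])
        positivity
      have hπc : ((π : ℝ) : ℂ) ≠ 0 := Complex.ofReal_ne_zero.2 hπ.ne'
      have hxtc : ((x : ℂ) - (t : ℂ)) ≠ 0 := by
        rw [sub_ne_zero]
        exact_mod_cast hx
      have hrw : ∀ ξ : ℝ, Complex.exp (↑(2 * π * (t - x) * ξ) * Complex.I)
          = Complex.exp ((((2 * π * (t - x) : ℝ) : ℂ) * Complex.I) * (ξ : ℝ)) := by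
        intro ξ
        congr 1
        push_cast
        ring
      rw [show (fun ξ : ℝ => Complex.exp (↑(2 * π * (t - x) * ξ) * Complex.I))
          = fun ξ : ℝ => Complex.exp ((((2 * π * (t - x) : ℝ) : ℂ) * Complex.I) * (ξ : ℝ))
          from funext hrw]
      rw [integral_Icc_eq_integral_Ioc,
        ← intervalIntegral.integral_of_le (by linarith : -cc ≤ cc),
        integral_exp_mul_complex hm]
      have e1 : (((2 * π * (t - x) : ℝ) : ℂ) * Complex.I) * ((cc : ℝ) : ℂ)
          = ((-(σ * (x - t) / b) : ℝ) : ℂ) * Complex.I := by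
        rw [hccdef]
        push_cast
        field_simp [hπc, hbne]
        ring
      have e2 : (((2 * π * (t - x) : ℝ) : ℂ) * Complex.I) * ((-cc : ℝ) : ℂ)
          = ((σ * (x - t) / b : ℝ) : ℂ) * Complex.I := by
        rw [hccdef]
        push_cast
        field_simp [hπc, hbne]
        ring
      have htx : ((t : ℂ) - (x : ℂ)) ≠ 0 := by
        rw [sub_ne_zero]
        exact_mod_cast Ne.symm hx
      rw [e1, e2, Complex.exp_mul_I, Complex.exp_mul_I, eq_div_iff hm]
      push_cast
      rw [Complex.cos_neg, Complex.sin_neg]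
      field_simp [hπc, hbne, hxtc, htx, Complex.I_ne_zero]
      ring
  -- phase factorization
  have hphase : ∀ x : ℝ, Complex.exp (Complex.I / (2 * b) *
      ((a * (x ^ 2 - t ^ 2) + 2 * p * (x - t) : ℝ) : ℂ)) = φ x * (φ t)⁻¹ := by
    intro x
    rw [hφdef]
    simp only
    rw [← Complex.exp_neg, ← Complex.exp_add]
    congr 1
    push_cast
    field_simp
    ring
  have hφt : φ t ≠ 0 := Complex.exp_ne_zero _
  -- integrability on the product for Fubini
  haveI : IsFiniteMeasure (volume.restrict (Set.Icc (-cc) cc)) :=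
    ⟨by rw [Measure.restrict_apply_univ]; exact isCompact_Icc.measure_lt_top⟩
  have hFub : Integrable (Function.uncurry fun x ξ =>
      g x * Complex.exp (↑(2 * π * (t - x) * ξ) * Complex.I))
      (volume.prod (volume.restrict (Set.Icc (-cc) cc))) := by
    have hcontF : Continuous fun z : ℝ × ℝ =>
        g z.1 * Complex.exp (↑(2 * π * (t - z.1) * z.2) * Complex.I) := by
      apply hgcont.comp continuous_fst |>.mul
      apply Complex.continuous_exp.comp
      apply Continuous.mul _ continuous_const
      apply Complex.continuous_ofReal.comp
      fun_prop
    have hbound : Integrable (fun z : ℝ × ℝ => ‖g z.1‖ * (1 : ℝ))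
        (volume.prod (volume.restrict (Set.Icc (-cc) cc))) :=
      hgint.norm.mul_prod (integrable_const 1)
    refine hbound.mono' hcontF.aestronglyMeasurable (Filter.Eventually.of_forall fun z => ?_)
    have h1 : ‖Complex.exp (((2 * π * (t - z.1) * z.2 : ℝ) : ℂ) * Complex.I)‖ = 1 := by
      rw [Complex.norm_exp_ofReal_mul_I]
    show ‖g z.1 * Complex.exp (((2 * π * (t - z.1) * z.2 : ℝ) : ℂ) * Complex.I)‖ ≤ ‖g z.1‖ * 1
    rw [norm_mul, h1]
  have hswap : (∫ x : ℝ, g x *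
      ∫ ξ in Set.Icc (-cc) cc, Complex.exp (↑(2 * π * (t - x) * ξ) * Complex.I))
      = ∫ ξ in Set.Icc (-cc) cc,
          ∫ x : ℝ, g x * Complex.exp (↑(2 * π * (t - x) * ξ) * Complex.I) := by
    have h1 : ∀ x : ℝ, (g x *
        ∫ ξ in Set.Icc (-cc) cc, Complex.exp (↑(2 * π * (t - x) * ξ) * Complex.I))
        = ∫ ξ in Set.Icc (-cc) cc, g x * Complex.exp (↑(2 * π * (t - x) * ξ) * Complex.I) :=
      fun x => (integral_const_mul _ _).symm
    rw [show (fun x : ℝ => g x *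
        ∫ ξ in Set.Icc (-cc) cc, Complex.exp (↑(2 * π * (t - x) * ξ) * Complex.I))
        = fun x : ℝ => ∫ ξ in Set.Icc (-cc) cc,
            g x * Complex.exp (↑(2 * π * (t - x) * ξ) * Complex.I) from funext h1]
    exact integral_integral_swap hFub
  -- the inner integral is a Fourier transform
  have hinner : ∀ ξ : ℝ, (∫ x : ℝ, g x * Complex.exp (↑(2 * π * (t - x) * ξ) * Complex.I))
      = Complex.exp (↑(2 * π * ξ * t) * Complex.I) * 𝓕 g ξ := by
    intro ξ
    rw [Real.fourier_real_eq_integral_exp_smul, ← integral_const_mul]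
    refine integral_congr_ae (Filter.Eventually.of_forall fun x => ?_)
    simp only [smul_eq_mul]
    have hE : (↑(2 * π * ξ * t) * Complex.I) + (↑(-2 * π * x * ξ) * Complex.I)
        = (↑(2 * π * (t - x) * ξ) : ℂ) * Complex.I := by
      push_cast
      ring
    calc g x * Complex.exp (↑(2 * π * (t - x) * ξ) * Complex.I)
        = Complex.exp ((↑(2 * π * ξ * t) * Complex.I) + (↑(-2 * π * x * ξ) * Complex.I)) * g x := by
          rw [hE]; ring
      _ = _ := by rw [Complex.exp_add]; ring
  -- assemble
  symm
  calc (∫ x : ℝ, f x *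
        Complex.exp (Complex.I / (2 * b) * ((a * (x ^ 2 - t ^ 2) + 2 * p * (x - t) : ℝ) : ℂ)) *
        (if x = t then ((σ / (π * b) : ℝ) : ℂ)
          else ((Real.sin (σ * (x - t) / b) / (π * (x - t)) : ℝ) : ℂ)))
      = ∫ x : ℝ, (φ t)⁻¹ * (g x *
          ∫ ξ in Set.Icc (-cc) cc, Complex.exp (↑(2 * π * (t - x) * ξ) * Complex.I)) := by
        refine integral_congr_ae (Filter.Eventually.of_forall fun x => ?_)
        beta_reduce
        rw [hphase x, ← hker x, hgdef]
        ring
    _ = (φ t)⁻¹ * ∫ x : ℝ, g x *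
          ∫ ξ in Set.Icc (-cc) cc, Complex.exp (↑(2 * π * (t - x) * ξ) * Complex.I) :=
        integral_const_mul _ _
    _ = (φ t)⁻¹ * ∫ ξ in Set.Icc (-cc) cc,
          ∫ x : ℝ, g x * Complex.exp (↑(2 * π * (t - x) * ξ) * Complex.I) := by rw [hswap]
    _ = (φ t)⁻¹ * ∫ ξ in Set.Icc (-cc) cc,
          Complex.exp (↑(2 * π * ξ * t) * Complex.I) * 𝓕 g ξ := by
        rw [show (fun ξ : ℝ => ∫ x : ℝ, g x * Complex.exp (↑(2 * π * (t - x) * ξ) * Complex.I))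
            = fun ξ : ℝ => Complex.exp (↑(2 * π * ξ * t) * Complex.I) * 𝓕 g ξ
            from funext hinner]
    _ = (φ t)⁻¹ * ∫ ξ : ℝ, Complex.exp (↑(2 * π * ξ * t) * Complex.I) * 𝓕 g ξ := by
        rw [← hrestrict]
    _ = (φ t)⁻¹ * g t := by rw [← hinv]
    _ = f t := by
        show (φ t)⁻¹ * (f t * φ t) = f t
        field_simp
end
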